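/- arXiv:math/9910120 — 5 statements merged into one kernel-verified Lean document; each statement's English description precedes it below -/
import Mathlib

section
/- The function K₀ is twice differentiable on (0,∞) and satisfies the modified Bessel equation of order zero: for every r > 0, K₀''(r) + (1/r)·K₀'(r) − K₀(r) = 0. -/
open Real MeasureTheory Set Filter Topology

noncomputable def K0 (r : ℝ) : ℝ :=
  ∫ t in Set.Ioi (1 : ℝ), Real.exp (-r * t) / Real.sqrt (t ^ 2 - 1)

noncomputable def Kb (n : ℕ) (r : ℝ) : ℝ :=
  ∫ t in Set.Ioi (1 : ℝ), Real.exp (-r * t) * t ^ n / Real.sqrt (t ^ 2 - 1)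

lemma sq_sub_one_pos {t : ℝ} (ht : 1 < t) : 0 < t ^ 2 - 1 := by nlinarith

lemma sqrt_pos' {t : ℝ} (ht : 1 < t) : 0 < Real.sqrt (t ^ 2 - 1) :=
  Real.sqrt_pos.2 (sq_sub_one_pos ht)

lemma contOn (n : ℕ) (r : ℝ) :
    ContinuousOn (fun t => Real.exp (-r * t) * t ^ n / Real.sqrt (t ^ 2 - 1)) (Ioi 1) := by
  apply ContinuousOn.div
  · fun_prop
  · fun_prop
  · intro t ht
    exact (sqrt_pos' ht).ne'

lemma tendsto_aux (n : ℕ) {s : ℝ} (hs : 0 < s) :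
    Tendsto (fun t : ℝ => t ^ n * Real.exp (-(s * t))) atTop (𝓝 0) := by
  have h1 : Tendsto (fun t : ℝ => s * t) atTop atTop :=
    Tendsto.const_mul_atTop hs tendsto_id
  have h2 := (Real.tendsto_pow_mul_exp_neg_atTop_nhds_zero n).comp h1
  have h3 := h2.const_mul ((s ^ n)⁻¹)
  rw [mul_zero] at h3
  refine h3.congr fun t => ?_
  simp only [Function.comp]
  rw [mul_pow]
  field_simp

lemma integrableOn_g (n : ℕ) {r : ℝ} (hr : 0 < r) :
    IntegrableOn (fun t => Real.exp (-r * t) * t ^ n / Real.sqrt (t ^ 2 - 1)) (Ioi 1) := by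
  have hunion : Ioc (1:ℝ) 2 ∪ Ioi 2 = Ioi 1 := Ioc_union_Ioi_eq_Ioi one_le_two
  rw [← hunion]
  apply IntegrableOn.union
  · -- on (1, 2]
    have hmeas : AEStronglyMeasurable
        (fun t => Real.exp (-r * t) * t ^ n / Real.sqrt (t ^ 2 - 1))
        (volume.restrict (Ioc (1:ℝ) 2)) := by
      apply ((contOn n r).mono Ioc_subset_Ioi_self).aestronglyMeasurable measurableSet_Ioc
    have hbound_int : IntegrableOn (fun t : ℝ => 2 ^ n * (t - 1) ^ (-(1/2) : ℝ)) (Ioc 1 2) := by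
      have h1 : IntervalIntegrable (fun x : ℝ => x ^ (-(1/2) : ℝ)) volume 0 1 :=
        intervalIntegral.intervalIntegrable_rpow' (by norm_num)
      have h2 : IntervalIntegrable (fun x : ℝ => (x - 1) ^ (-(1/2) : ℝ)) volume 1 2 := by
        have h' := h1.comp_sub_right 1
        norm_num at h' ⊢
        exact h'
      rw [intervalIntegrable_iff_integrableOn_Ioc_of_le (by norm_num)] at h2
      exact h2.const_mul _
    refine Integrable.mono' hbound_int hmeas ?_
    refine (ae_restrict_iff' measurableSet_Ioc).2 (ae_of_all _ fun t ht => ?_)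
    obtain ⟨ht1, ht2⟩ := ht
    have hsq := sqrt_pos' ht1
    have h0 : (0:ℝ) < t := lt_trans one_pos ht1
    rw [Real.norm_eq_abs, abs_of_nonneg (by positivity)]
    have hle1 : Real.exp (-r * t) ≤ 1 := by
      apply Real.exp_le_one_iff.2; nlinarith
    have hle2 : t ^ n ≤ 2 ^ n := pow_le_pow_left₀ h0.le ht2 n
    have hle3 : Real.sqrt (t - 1) ≤ Real.sqrt (t ^ 2 - 1) :=
      Real.sqrt_le_sqrt (by nlinarith)
    have hs1 : (0:ℝ) < Real.sqrt (t - 1) := Real.sqrt_pos.2 (by linarith)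
    have key : Real.exp (-r * t) * t ^ n / Real.sqrt (t ^ 2 - 1)
        ≤ 2 ^ n / Real.sqrt (t - 1) := by
      apply div_le_div₀ (by positivity) (by nlinarith [Real.exp_pos (-r*t), pow_pos h0 n]) hs1 hle3
    refine key.trans (le_of_eq ?_)
    rw [Real.rpow_neg (by linarith), ← Real.sqrt_eq_rpow, div_eq_mul_inv]
  · -- on (2, ∞)
    apply integrable_of_isBigO_exp_neg (half_pos hr)
      ((contOn n r).mono fun x hx => lt_of_lt_of_le one_lt_two (mem_Ici.1 hx))
    rw [Asymptotics.isBigO_iff]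
    refine ⟨1, ?_⟩
    have h1 : ∀ᶠ t : ℝ in atTop, t ^ n * Real.exp (-(r/2 * t)) ≤ 1 := by
      have := tendsto_aux n (half_pos hr)
      filter_upwards [this.eventually (eventually_le_nhds one_pos)] with t ht using ht
    filter_upwards [h1, eventually_ge_atTop (2:ℝ)] with t ht ht2
    have h1t : (1:ℝ) < t := by linarith
    have hsq := sqrt_pos' h1t
    have hsq1 : (1:ℝ) ≤ Real.sqrt (t ^ 2 - 1) := by
      nlinarith [Real.sq_sqrt (show (0:ℝ) ≤ t ^ 2 - 1 by nlinarith), Real.sqrt_nonneg (t ^ 2 - 1)]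
    rw [Real.norm_eq_abs, Real.norm_eq_abs, abs_of_nonneg (by positivity),
      abs_of_nonneg (Real.exp_pos _).le, one_mul]
    have htn : t ^ n ≤ Real.exp (r/2 * t) := by
      calc t ^ n = t ^ n * Real.exp (-(r/2*t)) * Real.exp (r/2*t) := by
            rw [mul_assoc, ← Real.exp_add]; simp
        _ ≤ 1 * Real.exp (r/2*t) := mul_le_mul_of_nonneg_right ht (Real.exp_pos _).le
        _ = Real.exp (r/2*t) := one_mul _
    calc Real.exp (-r * t) * t ^ n / Real.sqrt (t ^ 2 - 1)
        ≤ Real.exp (-r * t) * t ^ n / 1 :=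
          div_le_div_of_nonneg_left (by positivity) one_pos hsq1
      _ = Real.exp (-r * t) * t ^ n := div_one _
      _ ≤ Real.exp (-r * t) * Real.exp (r/2 * t) :=
          mul_le_mul_of_nonneg_left htn (Real.exp_pos _).le
      _ = Real.exp (-(r/2) * t) := by rw [← Real.exp_add]; ring_nf
lemma hasDerivAt_Kb (n : ℕ) {r : ℝ} (hr : 0 < r) :
    HasDerivAt (Kb n) (-(Kb (n+1) r)) r := by
  have hε : 0 < r / 2 := half_pos hr
  have main := hasDerivAt_integral_of_dominated_loc_of_deriv_le (μ := volume.restrict (Ioi 1))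
    (F := fun x t => Real.exp (-x * t) * t ^ n / Real.sqrt (t ^ 2 - 1))
    (F' := fun x t => -(Real.exp (-x * t) * t ^ (n+1) / Real.sqrt (t ^ 2 - 1)))
    (x₀ := r)
    (bound := fun t => Real.exp (-(r/2) * t) * t ^ (n+1) / Real.sqrt (t ^ 2 - 1))
    (Metric.ball_mem_nhds r hε)
    (.of_forall fun x => ((contOn n x).aestronglyMeasurable measurableSet_Ioi))
    (integrableOn_g n hr)
    (((contOn (n+1) r).neg).aestronglyMeasurable measurableSet_Ioi)
    ?_ (integrableOn_g (n+1) hε) ?_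
  · have : -(Kb (n+1) r) = ∫ t in Ioi (1:ℝ),
        -(Real.exp (-r * t) * t ^ (n+1) / Real.sqrt (t ^ 2 - 1)) := by
      rw [Kb, integral_neg]
    rw [this]
    exact main.2
  · refine (ae_restrict_iff' measurableSet_Ioi).2 (ae_of_all _ fun t ht x hx => ?_)
    have h1t : (1:ℝ) < t := ht
    have h0 : (0:ℝ) < t := lt_trans one_pos h1t
    have hsq := sqrt_pos' h1t
    have hx2 : r / 2 < x := by
      have := abs_lt.1 (mem_ball_iff_norm.1 hx); linarith [this.1]
    rw [norm_neg, Real.norm_eq_abs, abs_of_nonneg (by positivity)]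
    have hexp : Real.exp (-x * t) ≤ Real.exp (-(r/2) * t) := by
      rw [Real.exp_le_exp]; nlinarith
    exact div_le_div₀ (by positivity)
      (mul_le_mul_of_nonneg_right hexp (by positivity)) hsq le_rfl
  · refine (ae_restrict_iff' measurableSet_Ioi).2 (ae_of_all _ fun t ht x _ => ?_)
    have h1t : (1:ℝ) < t := ht
    have hd : HasDerivAt (fun x => Real.exp (-x * t)) (Real.exp (-x * t) * (-t)) x := by
      have : HasDerivAt (fun x : ℝ => -x * t) (-t) x := by
        simpa using ((hasDerivAt_id x).neg.mul_const t)
      exact this.exp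
    have := hd.mul_const (t ^ n / Real.sqrt (t ^ 2 - 1))
    refine (this.congr_deriv ?_).congr_of_eventuallyEq (.of_forall fun y => ?_)
    · rw [pow_succ]; ring
    · ring

lemma K0_eq : K0 = Kb 0 := by
  funext r; simp [K0, Kb]


lemma bessel_identity {r : ℝ} (hr : 0 < r) :
    Kb 1 r = r * (Kb 2 r - Kb 0 r) := by
  set f : ℝ → ℝ := fun t => Real.exp (-r * t) * Real.sqrt (t ^ 2 - 1) with hf
  have heq : EqOn (fun t => Real.exp (-r * t) * t ^ 2 / Real.sqrt (t ^ 2 - 1)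
      - Real.exp (-r * t) * t ^ 0 / Real.sqrt (t ^ 2 - 1)) f (Ioi 1) := by
    intro t ht
    have h1t : (1:ℝ) < t := ht
    have hpos := sq_sub_one_pos h1t
    have hd : (t ^ 2 - 1) / Real.sqrt (t ^ 2 - 1) = Real.sqrt (t ^ 2 - 1) := Real.div_sqrt
    simp only [f, pow_zero, mul_one]
    rw [div_sub_div_same, show Real.exp (-r*t) * t ^ 2 - Real.exp (-r*t)
      = Real.exp (-r*t) * (t ^ 2 - 1) by ring, mul_div_assoc, hd]
  have hJint : IntegrableOn f (Ioi 1) :=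
    IntegrableOn.congr_fun ((integrableOn_g 2 hr).sub (integrableOn_g 0 hr)) heq
      measurableSet_Ioi
  have hJ : ∫ t in Ioi (1:ℝ), f t = Kb 2 r - Kb 0 r := by
    rw [Kb, Kb, ← integral_sub (integrableOn_g 2 hr) (integrableOn_g 0 hr)]
    exact (setIntegral_congr_fun measurableSet_Ioi heq).symm
  set f' : ℝ → ℝ := fun t =>
    Real.exp (-r * t) * t ^ 1 / Real.sqrt (t ^ 2 - 1) - r * f t with hf'
  have hderiv : ∀ t ∈ Ioi (1:ℝ), HasDerivAt f (f' t) t := by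
    intro t ht
    have h1t : (1:ℝ) < t := ht
    have hpos := sq_sub_one_pos h1t
    have hsq := sqrt_pos' h1t
    have hde : HasDerivAt (fun x : ℝ => Real.exp (-r * x)) (Real.exp (-r * t) * (-r)) t := by
      have h1 : HasDerivAt (fun x : ℝ => -r * x) (-r) t := by
        simpa using (hasDerivAt_id t).const_mul (-r)
      exact h1.exp
    have hsub : HasDerivAt (fun x : ℝ => x ^ 2 - 1) (2 * t) t := by
      simpa using (hasDerivAt_pow 2 t).sub_const 1
    have hsqrt : HasDerivAt (fun x : ℝ => Real.sqrt (x ^ 2 - 1))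
        (2 * t / (2 * Real.sqrt (t ^ 2 - 1))) t := hsub.sqrt hpos.ne'
    have := hde.mul hsqrt
    refine this.congr_deriv ?_
    have h2 : 2 * t / (2 * Real.sqrt (t ^ 2 - 1)) = t / Real.sqrt (t ^ 2 - 1) :=
      mul_div_mul_left _ _ two_ne_zero
    rw [h2]
    simp only [hf', hf, pow_one]
    field_simp
    ring
  have f'int : IntegrableOn f' (Ioi 1) :=
    (integrableOn_g 1 hr).sub (hJint.const_mul r)
  have hcont : ContinuousWithinAt f (Ici 1) 1 := by
    apply Continuous.continuousWithinAt
    fun_prop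
  have htend : Tendsto f atTop (𝓝 0) := by
    apply squeeze_zero' (g := fun t => t ^ 1 * Real.exp (-(r * t)))
    · filter_upwards [eventually_ge_atTop (1:ℝ)] with t ht
      have : (0:ℝ) ≤ t ^ 2 - 1 := by nlinarith
      positivity
    · filter_upwards [eventually_ge_atTop (1:ℝ)] with t ht
      calc f t = Real.exp (-r * t) * Real.sqrt (t ^ 2 - 1) := rfl
        _ ≤ Real.exp (-r * t) * t := by
            apply mul_le_mul_of_nonneg_left _ (Real.exp_pos _).le
            exact (Real.sqrt_le_sqrt (by nlinarith)).trans_eq (Real.sqrt_sq (by linarith))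
        _ = t ^ 1 * Real.exp (-(r * t)) := by rw [pow_one, neg_mul]; ring
    · exact tendsto_aux 1 hr
  have hibp := integral_Ioi_of_hasDerivAt_of_tendsto hcont hderiv f'int htend
  have hf1 : f 1 = 0 := by simp [f]
  rw [hf1, sub_zero] at hibp
  rw [hf'] at hibp
  rw [integral_sub (integrableOn_g 1 hr) (hJint.const_mul r), MeasureTheory.integral_const_mul, hJ] at hibp
  have : Kb 1 r = ∫ t in Ioi (1:ℝ), Real.exp (-r * t) * t ^ 1 / Real.sqrt (t ^ 2 - 1) := rfl
  rw [this]
  linarith [hibp]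

/-- `K₀` is twice differentiable on `(0,∞)` and satisfies the modified Bessel
equation of order zero: `K₀''(r) + (1/r)·K₀'(r) − K₀(r) = 0` for every `r > 0`. -/
theorem K0_twice_differentiable_and_bessel :
    ∀ r : ℝ, 0 < r →
      DifferentiableAt ℝ K0 r ∧ DifferentiableAt ℝ (deriv K0) r ∧
      deriv (deriv K0) r + (1 / r) * deriv K0 r - K0 r = 0 := by
  intro r hr
  have hd0 : ∀ {x : ℝ}, 0 < x → HasDerivAt K0 (-(Kb 1 x)) x := by
    intro x hx; rw [K0_eq]; exact hasDerivAt_Kb 0 hx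
  have hderiv_eq : deriv K0 =ᶠ[𝓝 r] fun x => -(Kb 1 x) := by
    filter_upwards [Ioi_mem_nhds hr] with x hx
    exact (hd0 hx).deriv
  have hd1 : HasDerivAt (fun x => -(Kb 1 x)) (Kb 2 r) r := by
    have := (hasDerivAt_Kb 1 hr).neg
    rw [neg_neg] at this; exact this
  refine ⟨(hd0 hr).differentiableAt, ?_, ?_⟩
  · exact (Filter.EventuallyEq.differentiableAt_iff hderiv_eq).2 hd1.differentiableAt
  · have h2 : deriv (deriv K0) r = Kb 2 r := by
      rw [hderiv_eq.deriv_eq]; exact hd1.deriv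
    have h1 : deriv K0 r = -(Kb 1 r) := (hd0 hr).deriv
    rw [h2, h1, K0_eq]
    -- Bessel identity : Kb 1 r = r * (Kb 2 r - Kb 0 r)
    have key : Kb 1 r = r * (Kb 2 r - Kb 0 r) := bessel_identity hr
    field_simp
    nlinarith [key]
end

section
/- Up to scale, K₀ is the unique integrable solution of the modified Bessel equation of order zero: if F : (0,∞) → ℝ is twice continuously differentiable, satisfies F''(r) + (1/r)·F'(r) − F(r) = 0 for all r > 0, and the function r ↦ r·|F(r)| is integrable on (0,∞), then there exists a real constant b such that F(r) = b·K₀(r) for all r > 0. -/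
set_option maxHeartbeats 1000000

open MeasureTheory

section BesselAux
open Set Real Filter

noncomputable def besK (k : ℕ) (r t : ℝ) : ℝ := t ^ k * Real.exp (-r * t) / Real.sqrt (t ^ 2 - 1)

lemma besK_contOn (k : ℕ) (r : ℝ) : ContinuousOn (besK k r) (Ioi 1) := by
  apply ContinuousOn.div
  · exact ((continuous_pow k).mul (by continuity)).continuousOn
  · exact (Real.continuous_sqrt.comp (by continuity)).continuousOn
  · intro t ht
    have h1 : (1:ℝ) < t := ht
    have : (0:ℝ) < t ^ 2 - 1 := by nlinarith
    positivity

lemma besK_nonneg (k : ℕ) (r : ℝ) {t : ℝ} (ht : 1 < t) : 0 ≤ besK k r t := by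
  have h0 : (0:ℝ) < t := lt_trans one_pos ht
  unfold besK; positivity

lemma pow_le_exp_bound (k : ℕ) {r t : ℝ} (hr : 0 < r) (ht : 0 ≤ t) :
    t ^ k ≤ (k.factorial : ℝ) * (2 / r) ^ k * Real.exp (r * t / 2) := by
  have hx : 0 ≤ r * t / 2 := by positivity
  have h1 : (r * t / 2) ^ k / (k.factorial : ℝ) ≤ Real.exp (r * t / 2) := by
    calc (r * t / 2) ^ k / (k.factorial : ℝ)
        ≤ ∑ i ∈ Finset.range (k + 1), (r * t / 2) ^ i / (i.factorial : ℝ) :=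
          Finset.single_le_sum (f := fun i => (r * t / 2) ^ i / (i.factorial : ℝ))
            (fun i _ => by positivity) (Finset.self_mem_range_succ k)
      _ ≤ Real.exp (r * t / 2) := Real.sum_le_exp_of_nonneg hx _
  have hfac : (0:ℝ) < (k.factorial : ℝ) := by positivity
  have h2 : (r * t / 2) ^ k ≤ (k.factorial : ℝ) * Real.exp (r * t / 2) := by
    rw [div_le_iff₀ hfac] at h1; linarith [h1]
  have h3 : t ^ k = (2 / r) ^ k * (r * t / 2) ^ k := by
    rw [← mul_pow]; congr 1; field_simp
  rw [h3]
  calc (2 / r) ^ k * (r * t / 2) ^ k ≤ (2 / r) ^ k * ((k.factorial : ℝ) * Real.exp (r * t / 2)) := by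
        apply mul_le_mul_of_nonneg_left h2 (by positivity)
    _ = (k.factorial : ℝ) * (2 / r) ^ k * Real.exp (r * t / 2) := by ring

lemma integrable_besK (k : ℕ) {r : ℝ} (hr : 0 < r) : IntegrableOn (besK k r) (Ioi 1) := by
  have hmeas : ∀ s ⊆ Ioi (1:ℝ), MeasurableSet s → AEStronglyMeasurable (besK k r) (volume.restrict s) :=
    fun s hs hms => ((besK_contOn k r).mono hs).aestronglyMeasurable hms
  have hsplit : Ioi (1:ℝ) = Ioc 1 2 ∪ Ioi 2 := (Set.Ioc_union_Ioi_eq_Ioi (by norm_num)).symm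
  rw [hsplit]
  apply IntegrableOn.union
  · have hbig : IntegrableOn (fun t : ℝ => (2:ℝ)^k * (t - 1) ^ (-(1/2) : ℝ)) (Ioc 1 2) := by
      have : IntervalIntegrable (fun t : ℝ => (t - 1) ^ (-(1/2) : ℝ)) volume 1 2 := by
        have h := (intervalIntegral.intervalIntegrable_rpow' (a := 0) (b := 1)
          (r := (-(1/2) : ℝ)) (by norm_num)).comp_sub_right 1
        norm_num at h ⊢
        exact h
      rw [intervalIntegrable_iff_integrableOn_Ioc_of_le (by norm_num)] at this
      exact this.const_mul _
    apply Integrable.mono' hbig (hmeas _ Set.Ioc_subset_Ioi_self measurableSet_Ioc)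
    filter_upwards [ae_restrict_mem measurableSet_Ioc] with t ht
    obtain ⟨ht1, ht2⟩ := ht
    have h0 : (0:ℝ) < t := lt_trans one_pos ht1
    rw [Real.norm_of_nonneg (besK_nonneg k r ht1)]
    unfold besK
    have hs : Real.sqrt (t - 1) ≤ Real.sqrt (t ^ 2 - 1) := by
      apply Real.sqrt_le_sqrt; nlinarith
    have hspos : 0 < Real.sqrt (t - 1) := Real.sqrt_pos.2 (by linarith)
    have hnum : t ^ k * Real.exp (-r * t) ≤ (2:ℝ)^k := by
      calc t ^ k * Real.exp (-r * t) ≤ 2 ^ k * 1 :=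
            mul_le_mul (pow_le_pow_left₀ h0.le ht2 k) (Real.exp_le_one_iff.2 (by nlinarith))
              (Real.exp_nonneg _) (by positivity)
        _ = 2 ^ k := mul_one _
    have key : t ^ k * Real.exp (-r * t) / Real.sqrt (t ^ 2 - 1) ≤ (2:ℝ)^k / Real.sqrt (t - 1) :=
      div_le_div₀ (by positivity) hnum hspos hs
    calc t ^ k * Real.exp (-r * t) / Real.sqrt (t ^ 2 - 1) ≤ (2:ℝ)^k / Real.sqrt (t - 1) := key
      _ = (2:ℝ)^k * (t - 1) ^ (-(1/2) : ℝ) := by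
          rw [Real.rpow_neg (by linarith), ← Real.sqrt_eq_rpow, div_eq_mul_inv]
  · have hbig : IntegrableOn (fun t : ℝ => (k.factorial : ℝ) * (2 / r) ^ k * Real.exp (-(r/2) * t)) (Ioi 2) :=
      (exp_neg_integrableOn_Ioi 2 (by positivity)).const_mul _
    apply Integrable.mono' hbig (hmeas _ (Set.Ioi_subset_Ioi (by norm_num)) measurableSet_Ioi)
    filter_upwards [ae_restrict_mem measurableSet_Ioi] with t ht
    have ht1 : (1:ℝ) < t := lt_trans (by norm_num) ht
    have h0 : (0:ℝ) < t := lt_trans one_pos ht1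
    rw [Real.norm_of_nonneg (besK_nonneg k r ht1)]
    unfold besK
    have hden : (1:ℝ) ≤ Real.sqrt (t ^ 2 - 1) := by
      have h2t : (2:ℝ) < t := ht
      have h1 : (1:ℝ) ≤ t ^ 2 - 1 := by nlinarith
      simpa using Real.sqrt_le_sqrt h1
    have hnum : t ^ k * Real.exp (-r * t) ≤ (k.factorial : ℝ) * (2 / r) ^ k * Real.exp (-(r/2) * t) := by
      have := pow_le_exp_bound k hr h0.le
      calc t ^ k * Real.exp (-r * t)
          ≤ ((k.factorial : ℝ) * (2 / r) ^ k * Real.exp (r * t / 2)) * Real.exp (-r * t) := by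
            apply mul_le_mul_of_nonneg_right this (Real.exp_nonneg _)
        _ = (k.factorial : ℝ) * (2 / r) ^ k * Real.exp (-(r/2) * t) := by
            rw [mul_assoc, ← Real.exp_add]; ring_nf
    calc t ^ k * Real.exp (-r * t) / Real.sqrt (t ^ 2 - 1)
        ≤ t ^ k * Real.exp (-r * t) / 1 := by
          apply div_le_div_of_nonneg_left (by positivity) (by norm_num) hden
      _ = t ^ k * Real.exp (-r * t) := div_one _
      _ ≤ _ := hnum

noncomputable def Jb (k : ℕ) (r : ℝ) : ℝ := ∫ t in Ioi (1:ℝ), besK k r t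

lemma besK_meas (k : ℕ) (r : ℝ) : AEStronglyMeasurable (besK k r) (volume.restrict (Ioi 1)) :=
  (besK_contOn k r).aestronglyMeasurable measurableSet_Ioi

lemma besK_mono (k : ℕ) {x y t : ℝ} (hxy : x ≤ y) (ht : 1 < t) : besK k y t ≤ besK k x t := by
  have h0 : (0:ℝ) < t := lt_trans one_pos ht
  have hsq : (0:ℝ) < Real.sqrt (t ^ 2 - 1) := Real.sqrt_pos.2 (by nlinarith)
  unfold besK
  gcongr

lemma hasDerivAt_Jb (k : ℕ) {r : ℝ} (hr : 0 < r) : HasDerivAt (Jb k) (-(Jb (k+1) r)) r := by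
  have hmain := hasDerivAt_integral_of_dominated_loc_of_deriv_le
    (μ := volume.restrict (Ioi (1:ℝ))) (x₀ := r)
    (F := fun x t => besK k x t) (F' := fun x t => -(besK (k+1) x t))
    (bound := besK (k+1) (r/2)) (Metric.ball_mem_nhds r (half_pos hr))
    (Filter.Eventually.of_forall fun x => besK_meas k x)
    (integrable_besK k hr) ((besK_meas (k+1) r).neg)
    ?_ (integrable_besK (k+1) (half_pos hr)) ?_
  · have : Jb (k+1) r = ∫ t in Ioi (1:ℝ), besK (k+1) r t := rfl
    rw [show -(Jb (k+1) r) = ∫ t in Ioi (1:ℝ), -(besK (k+1) r t) by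
      rw [integral_neg]; rfl]
    exact hmain.2
  · filter_upwards [ae_restrict_mem measurableSet_Ioi] with t ht x hx
    have ht1 : (1:ℝ) < t := ht
    rw [norm_neg, Real.norm_of_nonneg (besK_nonneg (k+1) x ht1)]
    have hx2 : r/2 ≤ x := by
      rw [Metric.mem_ball, Real.dist_eq] at hx
      have := abs_lt.1 hx
      linarith [this.1]
    exact besK_mono (k+1) hx2 ht1
  · filter_upwards [ae_restrict_mem measurableSet_Ioi] with t ht x _
    have ht1 : (1:ℝ) < t := ht
    have h0 : (0:ℝ) < t := lt_trans one_pos ht1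
    have hexp : HasDerivAt (fun x : ℝ => Real.exp (-x * t)) (-t * Real.exp (-x * t)) x := by
      have h1 : HasDerivAt (fun x : ℝ => -x * t) (-t) x := by
        simpa using ((hasDerivAt_id x).neg.mul_const t)
      simpa [mul_comm] using h1.exp
    have := (hexp.const_mul (t ^ k)).div_const (Real.sqrt (t ^ 2 - 1))
    refine this.congr_deriv ?_
    symm
    unfold besK
    field_simp
    ring

-- integration by parts identity
lemma Jb_ode {r : ℝ} (hr : 0 < r) : Jb 1 r = r * (Jb 2 r - Jb 0 r) := by
  set f : ℝ → ℝ := fun t => Real.sqrt (t ^ 2 - 1) * Real.exp (-r * t) with hf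
  set f' : ℝ → ℝ := fun t => besK 1 r t - r * (besK 2 r t - besK 0 r t) with hf'
  have hderiv : ∀ t ∈ Ioi (1:ℝ), HasDerivAt f (f' t) t := by
    intro t ht
    have ht1 : (1:ℝ) < t := ht
    have h0 : (0:ℝ) < t := lt_trans one_pos ht1
    have hpos : (0:ℝ) < t ^ 2 - 1 := by nlinarith
    have hsq : (0:ℝ) < Real.sqrt (t ^ 2 - 1) := Real.sqrt_pos.2 hpos
    have h1 : HasDerivAt (fun t : ℝ => t ^ 2 - 1) (2 * t) t := by
      simpa using ((hasDerivAt_pow 2 t).sub_const 1)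
    have h2 : HasDerivAt (fun t : ℝ => Real.sqrt (t ^ 2 - 1)) (2 * t / (2 * Real.sqrt (t ^ 2 - 1))) t :=
      h1.sqrt hpos.ne'
    have hlin : HasDerivAt (fun t : ℝ => -r * t) (-r) t := by
      simpa using (hasDerivAt_id t).const_mul (-r)
    have h3 : HasDerivAt (fun t : ℝ => Real.exp (-r * t)) (Real.exp (-r * t) * -r) t := hlin.exp
    have h4 := h2.mul h3
    refine h4.congr_deriv ?_
    symm
    have hsqsq : Real.sqrt (t ^ 2 - 1) * Real.sqrt (t ^ 2 - 1) = t ^ 2 - 1 :=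
      Real.mul_self_sqrt hpos.le
    set s := Real.sqrt (t ^ 2 - 1) with hs
    simp only [hf', besK, pow_one, pow_zero, one_mul]
    field_simp
    ring_nf
    rw [show (-1 + t ^ 2 : ℝ) = t ^ 2 - 1 by ring, ← hs]
    linear_combination (r * s) * hsqsq
  have hcont : ContinuousWithinAt f (Ici 1) 1 := by
    apply Continuous.continuousWithinAt
    exact (Real.continuous_sqrt.comp (by continuity)).mul (by continuity)
  have hI20 : IntegrableOn (fun t => besK 2 r t - besK 0 r t) (Ioi 1) :=
    (integrable_besK 2 hr).sub (integrable_besK 0 hr)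
  have hIrm : IntegrableOn (fun t => r * (besK 2 r t - besK 0 r t)) (Ioi 1) := hI20.const_mul r
  have hint : IntegrableOn f' (Ioi 1) := (integrable_besK 1 hr).sub hIrm
  have htend : Tendsto f atTop (nhds 0) := by
    have hb : Tendsto (fun t : ℝ => t * Real.exp (-r * t)) atTop (nhds 0) := by
      have h1 : Tendsto (fun y : ℝ => (1/r) * (y * Real.exp (-y))) atTop (nhds ((1/r) * 0)) := by
        apply Tendsto.const_mul
        simpa [Real.exp_neg, div_eq_mul_inv] using Real.tendsto_pow_mul_exp_neg_atTop_nhds_zero 1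
      have h2 : Tendsto (fun t : ℝ => r * t) atTop atTop :=
        Tendsto.const_mul_atTop hr tendsto_id
      have := h1.comp h2
      simp only [mul_zero] at this
      convert this using 2 with t
      simp only [Function.comp]
      field_simp
    apply squeeze_zero' (g := fun t => t * Real.exp (-r * t)) _ _ hb
    · filter_upwards [Filter.eventually_ge_atTop (1:ℝ)] with t ht
      positivity
    · filter_upwards [Filter.eventually_ge_atTop (1:ℝ)] with t ht
      have hst : Real.sqrt (t ^ 2 - 1) ≤ t := by
        have h1 : Real.sqrt (t ^ 2 - 1) ≤ Real.sqrt (t ^ 2) := Real.sqrt_le_sqrt (by nlinarith)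
        rwa [Real.sqrt_sq (by linarith)] at h1
      exact mul_le_mul_of_nonneg_right hst (Real.exp_nonneg _)
  have := integral_Ioi_of_hasDerivAt_of_tendsto hcont hderiv hint htend
  have hf1 : f 1 = 0 := by simp [hf]
  rw [hf1, sub_zero] at this
  have hsplit : ∫ t in Ioi (1:ℝ), f' t
      = Jb 1 r - r * (Jb 2 r - Jb 0 r) := by
    rw [hf']
    rw [integral_sub (integrable_besK 1 hr) hIrm, MeasureTheory.integral_const_mul,
      integral_sub (integrable_besK 2 hr) (integrable_besK 0 hr)]
    rfl
  rw [hsplit] at this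
  linarith

lemma besK_ae_nonneg (k : ℕ) (r : ℝ) : 0 ≤ᵐ[volume.restrict (Ioi (1:ℝ))] besK k r := by
  filter_upwards [ae_restrict_mem measurableSet_Ioi] with t ht
  exact besK_nonneg k r ht

lemma setIntegral_besK_le (k : ℕ) {r : ℝ} (hr : 0 < r) {s : Set ℝ} (hs : s ⊆ Ioi 1)
    (hsm : MeasurableSet s) : ∫ t in s, besK k r t ≤ Jb k r := by
  apply setIntegral_mono_set (integrable_besK k hr) (besK_ae_nonneg k r)
  exact HasSubset.Subset.eventuallyLE hs

lemma Jb_lower {r : ℝ} (hr : 0 < r) : Real.exp (-(2*r)) / Real.sqrt 3 ≤ Jb 0 r := by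
  have h1 : ∫ t in Ioc (1:ℝ) 2, (Real.exp (-(2*r)) / Real.sqrt 3) = Real.exp (-(2*r)) / Real.sqrt 3 := by
    rw [setIntegral_const]
    rw [Real.volume_real_Ioc]
    norm_num
  rw [← h1]
  have h2 : ∫ t in Ioc (1:ℝ) 2, (Real.exp (-(2*r)) / Real.sqrt 3) ≤ ∫ t in Ioc (1:ℝ) 2, besK 0 r t := by
    apply setIntegral_mono_on (integrableOn_const (by simp))
      ((integrable_besK 0 hr).mono_set Ioc_subset_Ioi_self) measurableSet_Ioc
    intro t ⟨ht1, ht2⟩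
    have hsq3 : Real.sqrt (t ^ 2 - 1) ≤ Real.sqrt 3 := Real.sqrt_le_sqrt (by nlinarith)
    have hsqpos : (0:ℝ) < Real.sqrt (t ^ 2 - 1) := Real.sqrt_pos.2 (by nlinarith)
    have hexp : Real.exp (-(2*r)) ≤ Real.exp (-r * t) := Real.exp_le_exp.2 (by nlinarith)
    unfold besK
    rw [pow_zero, one_mul]
    exact div_le_div₀ (Real.exp_nonneg _) hexp hsqpos hsq3
  exact h2.trans (setIntegral_besK_le 0 hr Ioc_subset_Ioi_self measurableSet_Ioc)

lemma Jb_pos {r : ℝ} (hr : 0 < r) : 0 < Jb 0 r :=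
  lt_of_lt_of_le (by positivity) (Jb_lower hr)

lemma Jb_upper {r : ℝ} (hr : 1 ≤ r) : Jb 0 r ≤ Real.exp (-r) * (Real.exp 1 * Jb 0 1) := by
  have hr0 : (0:ℝ) < r := lt_of_lt_of_le one_pos hr
  have h1 : Jb 0 r ≤ ∫ t in Ioi (1:ℝ), (Real.exp (-r) * Real.exp 1) * besK 0 1 t := by
    apply setIntegral_mono_on (integrable_besK 0 hr0)
      ((integrable_besK 0 one_pos).const_mul _) measurableSet_Ioi
    intro t ht
    have ht1 : (1:ℝ) < t := ht
    have hsqpos : (0:ℝ) < Real.sqrt (t ^ 2 - 1) := Real.sqrt_pos.2 (by nlinarith)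
    have hnum : Real.exp (-r * t) ≤ Real.exp (-r) * Real.exp 1 * Real.exp (-1 * t) := by
      rw [← Real.exp_add, ← Real.exp_add]
      apply Real.exp_le_exp.2
      nlinarith
    simp only [besK, pow_zero, one_mul]
    rw [mul_div_assoc']
    exact div_le_div₀ (by positivity) hnum hsqpos le_rfl
  calc Jb 0 r ≤ ∫ t in Ioi (1:ℝ), (Real.exp (-r) * Real.exp 1) * besK 0 1 t := h1
    _ = (Real.exp (-r) * Real.exp 1) * Jb 0 1 := integral_const_mul _ _
    _ = Real.exp (-r) * (Real.exp 1 * Jb 0 1) := by ring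

lemma Jb_lower2 {r : ℝ} (hr : 1 ≤ r) :
    Real.exp (-r - 1) / Real.sqrt 3 * (2 * Real.sqrt (1/r)) ≤ Jb 0 r := by
  have hr0 : (0:ℝ) < r := lt_of_lt_of_le one_pos hr
  have hinv : (0:ℝ) < 1/r := by positivity
  have hinv1 : 1/r ≤ 1 := by rw [div_le_one hr0]; exact hr
  set c := Real.exp (-r - 1) / Real.sqrt 3 with hc
  have hcpos : 0 < c := by positivity
  -- the rpow integral
  have hII : IntervalIntegrable (fun t : ℝ => (t - 1) ^ (-(1/2) : ℝ)) volume 1 (1 + 1/r) := by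
    have h := (intervalIntegral.intervalIntegrable_rpow' (a := 0) (b := 1/r)
      (r := (-(1/2) : ℝ)) (by norm_num)).comp_sub_right 1
    simpa [add_comm, one_div] using h
  have hval : ∫ t in (1:ℝ)..(1 + 1/r), (t - 1) ^ (-(1/2) : ℝ) = 2 * Real.sqrt (1/r) := by
    rw [intervalIntegral.integral_comp_sub_right (fun x => x ^ (-(1/2) : ℝ)) 1]
    norm_num
    rw [integral_rpow (Or.inl (by norm_num))]
    rw [Real.zero_rpow (by norm_num)]
    rw [show (-(1/2) : ℝ) + 1 = (1/2 : ℝ) by norm_num, ← Real.sqrt_eq_rpow]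
    rw [one_div, Real.sqrt_inv]
    ring
  have hIoc : ∫ t in Ioc (1:ℝ) (1 + 1/r), c * (t - 1) ^ (-(1/2) : ℝ) = c * (2 * Real.sqrt (1/r)) := by
    rw [← intervalIntegral.integral_of_le (by linarith), intervalIntegral.integral_const_mul, hval]
  rw [← hIoc]
  have hmono : ∫ t in Ioc (1:ℝ) (1 + 1/r), c * (t - 1) ^ (-(1/2) : ℝ)
      ≤ ∫ t in Ioc (1:ℝ) (1 + 1/r), besK 0 r t := by
    apply setIntegral_mono_on
    · rw [← intervalIntegrable_iff_integrableOn_Ioc_of_le (by linarith)]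
      exact (hII.const_mul c)
    · exact (integrable_besK 0 hr0).mono_set Ioc_subset_Ioi_self
    · exact measurableSet_Ioc
    intro t ⟨ht1, ht2⟩
    have ht2' : t ≤ 2 := by linarith
    have htm : 0 < t - 1 := by linarith
    have hsq1 : Real.sqrt (t ^ 2 - 1) ≤ Real.sqrt 3 * Real.sqrt (t - 1) := by
      rw [← Real.sqrt_mul (by norm_num)]
      apply Real.sqrt_le_sqrt
      nlinarith
    have hsqpos : (0:ℝ) < Real.sqrt (t ^ 2 - 1) := Real.sqrt_pos.2 (by nlinarith)
    have hexp : Real.exp (-r - 1) ≤ Real.exp (-r * t) := by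
      apply Real.exp_le_exp.2
      have : r * t ≤ r * (1 + 1/r) := mul_le_mul_of_nonneg_left ht2 hr0.le
      have h2 : r * (1 + 1/r) = r + 1 := by field_simp
      nlinarith
    have hrw : c * (t - 1) ^ (-(1/2) : ℝ) = Real.exp (-r - 1) / (Real.sqrt 3 * Real.sqrt (t - 1)) := by
      rw [hc, Real.rpow_neg htm.le, ← Real.sqrt_eq_rpow]
      field_simp
    rw [hrw]
    unfold besK
    rw [pow_zero, one_mul]
    exact div_le_div₀ (Real.exp_nonneg _) hexp (by positivity) hsq1
  exact hmono.trans (setIntegral_besK_le 0 hr0 Ioc_subset_Ioi_self measurableSet_Ioc)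

-- elementary exponential bounds
lemma self_le_exp_half {x : ℝ} (hx : 0 ≤ x) : x ≤ Real.exp ((1/2) * x) := by
  have h := Real.add_one_le_exp ((1/4) * x)
  have h2 : Real.exp ((1/2) * x) = Real.exp ((1/4) * x) * Real.exp ((1/4) * x) := by
    rw [← Real.exp_add]; congr 1; ring
  have h3 := mul_le_mul h h (by linarith) (Real.exp_pos ((1/4) * x)).le
  nlinarith [sq_nonneg (1 - (1/4) * x)]

lemma sq_le_exp_half {x : ℝ} (hx : 0 ≤ x) : x ^ 2 / 16 ≤ Real.exp ((1/2) * x) := by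
  have h := Real.add_one_le_exp ((1/4) * x)
  have h2 : Real.exp ((1/2) * x) = Real.exp ((1/4) * x) * Real.exp ((1/4) * x) := by
    rw [← Real.exp_add]; congr 1; ring
  have h3 := mul_le_mul h h (by linarith) (Real.exp_pos ((1/4) * x)).le
  nlinarith [sq_nonneg (1 - (1/4) * x)]

-- constancy helper
lemma my_const_of_deriv_zero {f : ℝ → ℝ} (h : ∀ x ∈ Ioi (0:ℝ), HasDerivAt f 0 x)
    {a b : ℝ} (ha : 0 < a) (hb : 0 < b) : f a = f b := by
  have key : ∀ u v : ℝ, 0 < u → u ≤ v → f v = f u := by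
    intro u v hu huv
    apply constant_of_has_deriv_right_zero (f := f) (a := u) (b := v)
      (fun x hx => ((h x (lt_of_lt_of_le hu hx.1)).continuousAt).continuousWithinAt)
      (fun x hx => ((h x (lt_of_lt_of_le hu hx.1)).hasDerivWithinAt))
    exact right_mem_Icc.2 huv
  rcases le_total a b with hab | hab
  · exact (key a b ha hab).symm
  · exact key b a hb hab

-- monotonicity helper
lemma my_mono_of_deriv_nonneg {f f' : ℝ → ℝ}
    (hd : ∀ x ∈ Ici (1:ℝ), HasDerivAt f (f' x) x)
    (h0 : ∀ x ∈ Ici (1:ℝ), 0 ≤ f' x) {r : ℝ} (hr : 1 ≤ r) : f 1 ≤ f r := by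
  have hm : MonotoneOn f (Ici 1) := by
    apply monotoneOn_of_deriv_nonneg (convex_Ici 1)
    · exact fun x hx => (hd x hx).continuousAt.continuousWithinAt
    · intro x hx
      rw [interior_Ici] at hx
      exact (hd x (mem_Ici.2 (le_of_lt hx))).differentiableAt.differentiableWithinAt
    · intro x hx
      rw [interior_Ici] at hx
      rw [(hd x (mem_Ici.2 (le_of_lt hx))).deriv]
      exact h0 x (mem_Ici.2 (le_of_lt hx))
  exact hm self_mem_Ici hr hr

lemma no_pos_wronskian
    (F F' : ℝ → ℝ)
    (hF' : ∀ r : ℝ, 0 < r → HasDerivAt F (F' r) r)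
    (hint : IntegrableOn (fun r : ℝ => r * |F r|) (Set.Ioi 0))
    {c : ℝ} (hc : 0 < c)
    (hw : ∀ r : ℝ, 0 < r → F' r * Jb 0 r - F r * (-(Jb 1 r)) = c / r) : False := by
  set C := Real.exp 1 * Jb 0 1 with hCdef
  have hC : 0 < C := mul_pos (Real.exp_pos 1) (Jb_pos one_pos)
  set κ := c / C ^ 2 with hκdef
  have hκ : 0 < κ := by positivity
  clear_value κ
  set g : ℝ → ℝ := fun x => F x / Jb 0 x with hgdef
  have hg' : ∀ x : ℝ, 0 < x → HasDerivAt g (c / (x * (Jb 0 x) ^ 2)) x := by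
    intro x hx
    have h := (hF' x hx).div (hasDerivAt_Jb 0 hx) (Jb_pos hx).ne'
    refine h.congr_deriv ?_
    rw [hw x hx, div_div]
  -- the comparison function
  set ψ : ℝ → ℝ := fun x => g x - (2 * κ / 3) * Real.exp ((3/2) * x) with hψdef
  have hψd : ∀ x ∈ Ici (1:ℝ), HasDerivAt ψ
      (c / (x * (Jb 0 x) ^ 2) - κ * Real.exp ((3/2) * x)) x := by
    intro x hx
    have hx0 : (0:ℝ) < x := lt_of_lt_of_le one_pos hx
    have h2 : HasDerivAt (fun y : ℝ => (2 * κ / 3) * Real.exp ((3/2) * y))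
        (κ * Real.exp ((3/2) * x)) x := by
      have h3 : HasDerivAt (fun y : ℝ => (3/2 : ℝ) * y) (3/2 : ℝ) x := by
        simpa using (hasDerivAt_id x).const_mul (3/2 : ℝ)
      have := h3.exp.const_mul (2 * κ / 3)
      refine this.congr_deriv ?_
      ring
    exact (hg' x hx0).sub h2
  have hψ0 : ∀ x ∈ Ici (1:ℝ), 0 ≤ c / (x * (Jb 0 x) ^ 2) - κ * Real.exp ((3/2) * x) := by
    intro x hx
    have hx0 : (0:ℝ) < x := lt_of_lt_of_le one_pos hx
    have hG := Jb_pos hx0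
    have hub := Jb_upper hx
    rw [← hCdef] at hub
    rw [sub_nonneg]
    have h1 : x * (Jb 0 x) ^ 2 ≤ x * (Real.exp (-x) * C) ^ 2 := by
      have hsq := mul_le_mul hub hub hG.le
        (mul_nonneg (Real.exp_pos (-x)).le hC.le)
      nlinarith
    have h2 : c / (x * (Real.exp (-x) * C) ^ 2) ≤ c / (x * (Jb 0 x) ^ 2) :=
      div_le_div_of_nonneg_left hc.le (by positivity) h1
    refine le_trans ?_ h2
    rw [le_div_iff₀ (by positivity)]
    have e1 : Real.exp ((3/2) * x) * (Real.exp (-x)) ^ 2 = Real.exp (-((1/2) * x)) := by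
      rw [sq, ← Real.exp_add, ← Real.exp_add]; congr 1; ring
    have heq : κ * Real.exp ((3/2) * x) * (x * (Real.exp (-x) * C) ^ 2)
        = c * (x * (Real.exp ((3/2) * x) * (Real.exp (-x)) ^ 2)) := by
      rw [hκdef]; field_simp
    rw [heq, e1]
    have e2 : x ≤ Real.exp ((1/2) * x) := self_le_exp_half hx0.le
    have e3 : Real.exp ((1/2) * x) * Real.exp (-((1/2) * x)) = 1 := by
      rw [← Real.exp_add]; simp
    have e4 : x * Real.exp (-((1/2) * x)) ≤ 1 := by
      calc x * Real.exp (-((1/2) * x)) ≤ Real.exp ((1/2) * x) * Real.exp (-((1/2) * x)) :=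
            mul_le_mul_of_nonneg_right e2 (Real.exp_pos _).le
        _ = 1 := e3
    calc c * (x * Real.exp (-((1/2) * x))) ≤ c * 1 := mul_le_mul_of_nonneg_left e4 hc.le
      _ = c := mul_one c
  set B := g 1 - (2 * κ / 3) * Real.exp ((3/2) * 1) with hBdef
  have hglb : ∀ r : ℝ, 1 ≤ r → (2 * κ / 3) * Real.exp ((3/2) * r) + B ≤ g r := by
    intro r hr
    have := my_mono_of_deriv_nonneg hψd hψ0 hr
    simp only [hψdef] at this
    rw [hBdef]
    linarith
  -- eventually F r is large
  have ht : Tendsto (fun r : ℝ => (κ/3) * Real.exp ((3/2) * r)) atTop atTop := by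
    apply Tendsto.const_mul_atTop (by linarith)
    exact Real.tendsto_exp_atTop.comp (Tendsto.const_mul_atTop (by norm_num) tendsto_id)
  have hev1 := ht.eventually_ge_atTop (-B)
  rw [eventually_atTop] at hev1
  obtain ⟨R₀, hR₀⟩ := hev1
  set κ₃ := κ / 432 with hκ₃def
  have hκ₃ : 0 < κ₃ := by rw [hκ₃def]; linarith
  clear_value κ₃
  set R := max (max R₀ 1) (1/κ₃) with hRdef
  have hR1 : (1:ℝ) ≤ R := le_trans (le_max_right R₀ 1) (le_max_left _ _)
  have hRpos : (0:ℝ) < R := lt_of_lt_of_le one_pos hR1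
  have key : ∀ r : ℝ, r ∈ Ioi R → r ≤ r * |F r| := by
    intro r hr
    have hrR : R < r := hr
    have hr1 : (1:ℝ) ≤ r := le_trans hR1 hrR.le
    have hr0 : (0:ℝ) < r := lt_of_lt_of_le one_pos hr1
    have hrR0 : R₀ ≤ r := le_trans (le_trans (le_max_left R₀ 1) (le_max_left _ _)) hrR.le
    have hrκ : 1/κ₃ ≤ r := le_trans (le_max_right _ _) hrR.le
    have hG := Jb_pos hr0
    -- lower bound for g r
    have h2 := hR₀ r hrR0
    have hgge : (κ/3) * Real.exp ((3/2) * r) ≤ g r := by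
      have := hglb r hr1
      nlinarith [Real.exp_pos ((3/2) * r)]
    -- lower bound for Jb 0 r, simplified constants
    have hE3 : Real.exp 1 ≤ 3 := by
      have := Real.exp_one_lt_d9
      linarith
    have hS3 : Real.sqrt 3 ≤ 3 := by
      have h9 : Real.sqrt 3 ≤ Real.sqrt 9 := Real.sqrt_le_sqrt (by norm_num)
      rwa [show (9:ℝ) = 3 ^ 2 by norm_num, Real.sqrt_sq (by norm_num)] at h9
    have hs3pos : (0:ℝ) < Real.sqrt 3 := Real.sqrt_pos.2 (by norm_num)
    have hu : (0:ℝ) ≤ Real.sqrt (1/r) := Real.sqrt_nonneg _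
    have hGl' : Real.exp (-r) * Real.sqrt (1/r) / 9 ≤ Jb 0 r := by
      refine le_trans ?_ (Jb_lower2 hr1)
      have h1 : Real.exp (-r) / 3 ≤ Real.exp (-r - 1) := by
        rw [show -r - 1 = -r - 1 from rfl, Real.exp_sub]
        exact div_le_div_of_nonneg_left (Real.exp_pos _).le (Real.exp_pos 1) hE3
      rw [div_mul_eq_mul_div, le_div_iff₀ hs3pos]
      nlinarith [mul_le_mul_of_nonneg_right h1 hu, Real.exp_pos (-r),
        mul_nonneg (Real.exp_pos (-r)).le hu, hS3, hs3pos]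
    -- combine
    have hFr : F r = g r * Jb 0 r := by
      rw [hgdef]; field_simp
    have a1 : Real.exp ((3/2) * r) * Real.exp (-r) = Real.exp ((1/2) * r) := by
      rw [← Real.exp_add]; congr 1; ring
    have a2 : r ^ 2 / 16 ≤ Real.exp ((1/2) * r) := sq_le_exp_half hr0.le
    have a3 : 1/r ≤ Real.sqrt (1/r) := by
      have hsq : Real.sqrt (1/r) * Real.sqrt (1/r) = 1/r := Real.mul_self_sqrt (by positivity)
      have hle1 : Real.sqrt (1/r) ≤ 1 := by
        have := Real.sqrt_le_sqrt (show (1/r:ℝ) ≤ 1 by rw [div_le_one hr0]; exact hr1)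
        simpa using this
      nlinarith [Real.sqrt_nonneg (1/r)]
    have a4 : (r^2/16) * (1/r) ≤ Real.exp ((1/2)*r) * Real.sqrt (1/r) :=
      mul_le_mul a2 a3 (by positivity) (Real.exp_pos _).le
    have hF1 : κ₃ * r ≤ F r := by
      have m1 : (κ/3) * Real.exp ((3/2)*r) * (Real.exp (-r) * Real.sqrt (1/r) / 9)
          ≤ g r * Jb 0 r :=
        mul_le_mul hgge hGl' (by positivity)
          (le_trans (mul_nonneg (by linarith) (Real.exp_pos _).le) hgge)
      have m2 : (κ/3) * Real.exp ((3/2)*r) * (Real.exp (-r) * Real.sqrt (1/r) / 9)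
          = (κ/27) * (Real.exp ((1/2)*r) * Real.sqrt (1/r)) := by rw [← a1]; ring
      have m3 : κ₃ * r = (κ/27) * ((r^2/16) * (1/r)) := by
        rw [hκ₃def]; field_simp; ring
      have m4 : (κ/27) * ((r^2/16)*(1/r)) ≤ (κ/27) * (Real.exp ((1/2)*r) * Real.sqrt (1/r)) :=
        mul_le_mul_of_nonneg_left a4 (by linarith)
      calc κ₃ * r = (κ/27) * ((r^2/16) * (1/r)) := m3
        _ ≤ (κ/27) * (Real.exp ((1/2)*r) * Real.sqrt (1/r)) := m4
        _ = (κ/3) * Real.exp ((3/2)*r) * (Real.exp (-r) * Real.sqrt (1/r) / 9) := m2.symm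
        _ ≤ g r * Jb 0 r := m1
        _ = F r := hFr.symm
    have h1κ : 1 ≤ κ₃ * r := by
      rw [div_le_iff₀ hκ₃] at hrκ
      nlinarith
    have habs : 1 ≤ |F r| := le_trans (le_trans h1κ hF1) (le_abs_self _)
    nlinarith
  -- contradiction with integrability
  have hint2 : IntegrableOn (fun r : ℝ => r * |F r|) (Ioi R) :=
    hint.mono_set (Ioi_subset_Ioi hRpos.le)
  have hid : IntegrableOn (fun x : ℝ => x) (Ioi R) := by
    apply Integrable.mono' hint2 aestronglyMeasurable_id
    filter_upwards [ae_restrict_mem measurableSet_Ioi] with x hx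
    have hxpos : 0 < x := lt_trans hRpos hx
    simp only [id_eq, Real.norm_eq_abs, abs_of_pos hxpos]
    exact key x hx
  have hid2 : IntegrableOn (fun x : ℝ => x ^ (1:ℝ)) (Ioi R) := by
    apply hid.congr_fun _ measurableSet_Ioi
    intro x hx
    exact (Real.rpow_one x).symm
  rw [integrableOn_Ioi_rpow_iff hRpos] at hid2
  norm_num at hid2

lemma K0_eq_Jb (r : ℝ) : K0 r = Jb 0 r := by
  unfold K0 Jb besK
  norm_num

end BesselAux

open Set Real Filter in
/-- Up to scale, `K₀` is the unique solution of the modified Bessel equation of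
order zero for which `r ↦ r·|F(r)|` is integrable on `(0,∞)`. -/
theorem bessel_integrable_solution_is_K0
    (F F' F'' : ℝ → ℝ)
    (hF' : ∀ r : ℝ, 0 < r → HasDerivAt F (F' r) r)
    (hF'' : ∀ r : ℝ, 0 < r → HasDerivAt F' (F'' r) r)
    (hcont : ContinuousOn F'' (Set.Ioi 0))
    (hode : ∀ r : ℝ, 0 < r → F'' r + (1 / r) * F' r - F r = 0)
    (hint : IntegrableOn (fun r : ℝ => r * |F r|) (Set.Ioi 0)) :
    ∃ b : ℝ, ∀ r : ℝ, 0 < r → F r = b * K0 r := by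
  set G' : ℝ → ℝ := fun x => -(Jb 1 x) with hG'def
  have hG' : ∀ x : ℝ, 0 < x → HasDerivAt (Jb 0) (G' x) x := fun x hx => hasDerivAt_Jb 0 hx
  have hG'' : ∀ x : ℝ, 0 < x → HasDerivAt G' (Jb 2 x) x := by
    intro x hx
    have h := (hasDerivAt_Jb 1 hx).neg
    rw [neg_neg] at h
    exact h
  have hodeG : ∀ x : ℝ, 0 < x → Jb 2 x + (1/x) * G' x - Jb 0 x = 0 := by
    intro x hx
    have h := Jb_ode hx
    simp only [hG'def]
    field_simp
    linarith
  have hW : ∀ x ∈ Ioi (0:ℝ), HasDerivAt (fun x => x * (F' x * Jb 0 x - F x * G' x)) 0 x := by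
    intro x hx
    have hx0 : (0:ℝ) < x := hx
    have hprod : HasDerivAt (fun y => F' y * Jb 0 y - F y * G' y)
        ((F'' x * Jb 0 x + F' x * G' x) - (F' x * G' x + F x * Jb 2 x)) x :=
      ((hF'' x hx0).mul (hG' x hx0)).sub ((hF' x hx0).mul (hG'' x hx0))
    have h := (hasDerivAt_id x).mul hprod
    refine h.congr_deriv ?_
    symm
    simp only [id_eq]
    have e1 : F'' x = F x - (1/x) * F' x := by linarith [hode x hx0]
    have e2 : Jb 2 x = Jb 0 x - (1/x) * G' x := by linarith [hodeG x hx0]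
    rw [e1, e2]
    field_simp
    ring
  have hWc : ∀ r : ℝ, 0 < r → r * (F' r * Jb 0 r - F r * G' r)
      = F' 1 * Jb 0 1 - F 1 * G' 1 := by
    intro r hr
    have h := my_const_of_deriv_zero (f := fun x => x * (F' x * Jb 0 x - F x * G' x)) hW hr one_pos
    simpa using h
  rcases lt_trichotomy (F' 1 * Jb 0 1 - F 1 * G' 1) 0 with hneg | hzero | hpos
  · -- negative: apply to -F
    exfalso
    apply no_pos_wronskian (fun x => -F x) (fun x => -F' x)
      (fun r hr => (hF' r hr).neg) ?hint (c := -(F' 1 * Jb 0 1 - F 1 * G' 1)) (by linarith) ?hw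
    case hint =>
      have : (fun r : ℝ => r * |-F r|) = fun r : ℝ => r * |F r| := by
        funext r; rw [abs_neg]
      rw [this]
      exact hint
    case hw =>
      intro r hr
      have h := hWc r hr
      simp only [hG'def] at h
      rw [eq_div_iff hr.ne']
      linear_combination -h
  · -- zero Wronskian
    have hnum : ∀ r : ℝ, 0 < r → F' r * Jb 0 r - F r * G' r = 0 := by
      intro r hr
      have h := hWc r hr
      rw [hzero] at h
      rcases mul_eq_zero.1 h with h' | h'
      · exact absurd h' hr.ne'
      · exact h'
    set g : ℝ → ℝ := fun x => F x / Jb 0 x with hgdef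
    have hg0 : ∀ x ∈ Ioi (0:ℝ), HasDerivAt g 0 x := by
      intro x hx
      have hx0 : (0:ℝ) < x := hx
      have h := (hF' x hx0).div (hG' x hx0) (Jb_pos hx0).ne'
      refine h.congr_deriv ?_
      rw [hnum x hx0, zero_div]
    refine ⟨F 1 / Jb 0 1, fun r hr => ?_⟩
    have hgr := my_const_of_deriv_zero hg0 hr one_pos
    simp only [hgdef] at hgr
    rw [K0_eq_Jb]
    have hGr := Jb_pos hr
    have hG1 := Jb_pos (one_pos : (0:ℝ) < 1)
    field_simp at hgr ⊢
    linarith [hgr]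
  · -- positive
    exfalso
    apply no_pos_wronskian F F' hF' hint (c := F' 1 * Jb 0 1 - F 1 * G' 1) hpos
    intro r hr
    have h := hWc r hr
    simp only [hG'def] at h
    rw [eq_div_iff hr.ne']
    linear_combination h
end

section
/- The radially symmetric function x ↦ K₀(|x|) is integrable on ℝ² with respect to Lebesgue measure, and ∫_{ℝ²} K₀(|x|) dx = 2π; equivalently, the function r ↦ r·K₀(r) is integrable on (0,∞) and ∫₀^∞ r·K₀(r) dr = 1. -/
open MeasureTheory Real

/-- The Euclidean norm on `ℝ²` (realized as `ℝ × ℝ`). -/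
noncomputable def eNorm2 (p : ℝ × ℝ) : ℝ :=
  Real.sqrt (p.1 ^ 2 + p.2 ^ 2)

set_option maxHeartbeats 1000000

open Set Filter Topology ENNReal

-- Lemma B: outer integral
lemma outer_int : IntegrableOn (fun t : ℝ => 1 / (t ^ 2 * Real.sqrt (t ^ 2 - 1))) (Ioi 1) volume ∧
    (∫ t in Ioi (1:ℝ), 1 / (t ^ 2 * Real.sqrt (t ^ 2 - 1))) = 1 := by
  have hcont : ContinuousWithinAt (fun t : ℝ => Real.sqrt (t ^ 2 - 1) / t) (Ici 1) 1 := by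
    apply ContinuousWithinAt.div
    · exact ((continuous_pow 2).sub continuous_const).sqrt.continuousWithinAt
    · exact continuousWithinAt_id
    · norm_num
  have hderiv : ∀ t ∈ Ioi (1:ℝ), HasDerivAt (fun t : ℝ => Real.sqrt (t ^ 2 - 1) / t)
      (1 / (t ^ 2 * Real.sqrt (t ^ 2 - 1))) t := by
    intro t ht
    have ht1 : (1:ℝ) < t := ht
    have h0 : (0:ℝ) < t ^ 2 - 1 := by nlinarith
    have hs : (0:ℝ) < Real.sqrt (t ^ 2 - 1) := Real.sqrt_pos.mpr h0
    have h1 : HasDerivAt (fun t : ℝ => Real.sqrt (t ^ 2 - 1)) (t / Real.sqrt (t ^ 2 - 1)) t := by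
      have : HasDerivAt (fun t : ℝ => t ^ 2 - 1) (2 * t) t := by
        simpa using (hasDerivAt_pow 2 t).sub_const 1
      have := this.sqrt (ne_of_gt h0)
      convert this using 1
      field_simp
    have : HasDerivAt (fun t : ℝ => Real.sqrt (t ^ 2 - 1) / t)
        ((t / Real.sqrt (t ^ 2 - 1) * t - Real.sqrt (t ^ 2 - 1) * 1) / t ^ 2) t :=
      h1.fun_div (hasDerivAt_id' t) (by positivity)
    convert this using 1
    have hss := Real.sq_sqrt h0.le
    field_simp
    nlinarith [hss]
  have hpos : ∀ t ∈ Ioi (1:ℝ), 0 ≤ 1 / (t ^ 2 * Real.sqrt (t ^ 2 - 1)) := by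
    intro t ht; positivity
  have hlim : Tendsto (fun t : ℝ => Real.sqrt (t ^ 2 - 1) / t) atTop (𝓝 1) := by
    have : ∀ᶠ t : ℝ in atTop, Real.sqrt (1 - 1 / t ^ 2) = Real.sqrt (t ^ 2 - 1) / t := by
      filter_upwards [eventually_gt_atTop (1:ℝ)] with t ht
      have ht0 : (0:ℝ) < t := lt_trans one_pos ht
      rw [show (1 - 1/t^2 : ℝ) = (t^2-1)/t^2 by field_simp,
        Real.sqrt_div (by nlinarith) , Real.sqrt_sq ht0.le]
    have h2 : Tendsto (fun t : ℝ => Real.sqrt (1 - 1 / t ^ 2)) atTop (𝓝 1) := by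
      have : Tendsto (fun t : ℝ => 1 - 1 / t ^ 2) atTop (𝓝 (1 - 0)) :=
        tendsto_const_nhds.sub (tendsto_const_nhds.div_atTop (tendsto_pow_atTop (by norm_num)))
      simpa [Function.comp_def] using (Real.continuous_sqrt.tendsto 1).comp (by simpa using this)
    exact h2.congr' this
  refine ⟨integrableOn_Ioi_deriv_of_nonneg hcont hderiv hpos hlim, ?_⟩
  rw [integral_Ioi_of_hasDerivAt_of_nonneg hcont hderiv hpos hlim]
  norm_num

lemma inner_int {t : ℝ} (ht : 0 < t) :
    IntegrableOn (fun r : ℝ => r * Real.exp (-r * t)) (Ioi 0) volume ∧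
    (∫ r in Ioi (0:ℝ), r * Real.exp (-r * t)) = 1 / t ^ 2 := by
  set G : ℝ → ℝ := fun r => -((r * t + 1) / t ^ 2) * Real.exp (-r * t) with hG
  have hcont : ContinuousWithinAt G (Ici 0) 0 := by
    apply Continuous.continuousWithinAt
    continuity
  have hderiv : ∀ r ∈ Ioi (0:ℝ), HasDerivAt G (r * Real.exp (-r * t)) r := by
    intro r _
    have h1 : HasDerivAt (fun r : ℝ => -((r * t + 1) / t ^ 2)) (-(t / t ^ 2)) r := by
      have := (((hasDerivAt_id r).mul_const t).add_const 1).div_const (t ^ 2)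
      simpa using this.fun_neg
    have h2 : HasDerivAt (fun r : ℝ => Real.exp (-r * t)) (-t * Real.exp (-r * t)) r := by
      have hlin : HasDerivAt (fun r : ℝ => -r * t) (-t) r := by
        simpa using ((hasDerivAt_id r).neg.mul_const t)
      simpa [mul_comm, Function.comp_def] using (Real.hasDerivAt_exp (-r * t)).comp r hlin
    have : HasDerivAt (fun r => -((r * t + 1) / t ^ 2) * Real.exp (-r * t))
        (-(t / t ^ 2) * Real.exp (-r * t) + -((r * t + 1) / t ^ 2) * (-t * Real.exp (-r * t))) r :=
      h1.mul h2
    convert this using 1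
    field_simp
    ring
  have hpos : ∀ r ∈ Ioi (0:ℝ), 0 ≤ r * Real.exp (-r * t) := by
    intro r hr
    exact mul_nonneg (le_of_lt hr) (Real.exp_pos _).le
  have hlim : Tendsto G atTop (𝓝 0) := by
    have hin : Tendsto (fun x : ℝ => -(1 / t ^ 2) * (x ^ 1 * Real.exp (-x) + Real.exp (-x)))
        atTop (𝓝 (-(1 / t ^ 2) * (0 + 0))) :=
      ((tendsto_pow_mul_exp_neg_atTop_nhds_zero 1).add tendsto_exp_neg_atTop_nhds_zero).const_mul _
    have hin' : Tendsto (fun x : ℝ => -((x + 1) / t ^ 2) * Real.exp (-x)) atTop (𝓝 0) := by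
      simpa using hin.congr (fun x => by ring)
    have hmul : Tendsto (fun r : ℝ => r * t) atTop atTop :=
      Tendsto.atTop_mul_const ht tendsto_id
    have := hin'.comp hmul
    refine this.congr fun r => ?_
    simp only [Function.comp_apply, hG]
    ring_nf
  constructor
  · exact integrableOn_Ioi_deriv_of_nonneg hcont hderiv hpos hlim
  · rw [integral_Ioi_of_hasDerivAt_of_nonneg hcont hderiv hpos hlim]
    simp [hG]

lemma F_meas : Measurable (fun p : ℝ × ℝ => Real.exp (-p.1 * p.2) / Real.sqrt (p.2 ^ 2 - 1)) := by
  fun_prop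

lemma K0_meas : StronglyMeasurable K0 :=
  F_meas.stronglyMeasurable.integral_prod_right' (ν := volume.restrict (Set.Ioi 1))

lemma K0_nonneg (r : ℝ) : 0 ≤ K0 r := by
  apply integral_nonneg
  intro t
  positivity

noncomputable def φ : ℝ × ℝ → ℝ≥0∞ :=
  fun p => ENNReal.ofReal (p.1 * Real.exp (-p.1 * p.2) / Real.sqrt (p.2 ^ 2 - 1))

lemma φ_meas : Measurable φ := by
  unfold φ; fun_prop

lemma L_eq_one :
    (∫⁻ p, φ p ∂((volume.restrict (Ioi (0:ℝ))).prod (volume.restrict (Ioi (1:ℝ))))) = 1 := by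
  rw [lintegral_prod_symm _ φ_meas.aemeasurable]
  have hstep : ∀ t ∈ Ioi (1:ℝ),
      (∫⁻ r in Ioi (0:ℝ), φ (r, t)) = ENNReal.ofReal (1 / (t ^ 2 * Real.sqrt (t ^ 2 - 1))) := by
    intro t ht
    have ht1 : (1:ℝ) < t := ht
    have ht0 : (0:ℝ) < t := lt_trans one_pos ht1
    have hs0 : (0:ℝ) < Real.sqrt (t ^ 2 - 1) := Real.sqrt_pos.mpr (by nlinarith)
    have hInt : IntegrableOn
        (fun r : ℝ => r * Real.exp (-r * t) * (Real.sqrt (t ^ 2 - 1))⁻¹) (Ioi 0) volume :=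
      (inner_int ht0).1.mul_const _
    have hval : (∫ r in Ioi (0:ℝ), r * Real.exp (-r * t) * (Real.sqrt (t ^ 2 - 1))⁻¹)
        = 1 / t ^ 2 * (Real.sqrt (t ^ 2 - 1))⁻¹ := by
      rw [integral_mul_const, (inner_int ht0).2]
    have hae : 0 ≤ᵐ[volume.restrict (Ioi (0:ℝ))]
        (fun r : ℝ => r * Real.exp (-r * t) * (Real.sqrt (t ^ 2 - 1))⁻¹) := by
      filter_upwards [ae_restrict_mem (measurableSet_Ioi (a := (0:ℝ)))] with r hr
      have hr0 : (0:ℝ) < r := hr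
      positivity
    have := ofReal_integral_eq_lintegral_ofReal hInt hae
    rw [hval] at this
    calc (∫⁻ r in Ioi (0:ℝ), φ (r, t))
        = ∫⁻ r in Ioi (0:ℝ),
            ENNReal.ofReal (r * Real.exp (-r * t) * (Real.sqrt (t ^ 2 - 1))⁻¹) := by
          unfold φ; simp_rw [div_eq_mul_inv]
      _ = ENNReal.ofReal (1 / t ^ 2 * (Real.sqrt (t ^ 2 - 1))⁻¹) := this.symm
      _ = ENNReal.ofReal (1 / (t ^ 2 * Real.sqrt (t ^ 2 - 1))) := by
          rw [one_div, one_div, mul_inv]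
  have : (∫⁻ t in Ioi (1:ℝ), ∫⁻ r in Ioi (0:ℝ), φ (r, t))
      = ∫⁻ t in Ioi (1:ℝ), ENNReal.ofReal (1 / (t ^ 2 * Real.sqrt (t ^ 2 - 1))) :=
    setLIntegral_congr_fun measurableSet_Ioi hstep
  rw [this, ← ofReal_integral_eq_lintegral_ofReal outer_int.1
    (Filter.Eventually.of_forall fun t => by positivity), outer_int.2, ENNReal.ofReal_one]

lemma φ_split {r : ℝ} (hr0 : 0 < r) : (∫⁻ t in Ioi (1:ℝ), φ (r, t))
    = ENNReal.ofReal r * ∫⁻ t in Ioi (1:ℝ),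
        ENNReal.ofReal (Real.exp (-r * t) / Real.sqrt (t ^ 2 - 1)) := by
  rw [← lintegral_const_mul (ENNReal.ofReal r)
    (Measurable.ennreal_ofReal (by fun_prop))]
  refine lintegral_congr fun t => ?_
  rw [← ENNReal.ofReal_mul hr0.le]
  unfold φ
  rw [mul_div_assoc]

lemma key_lintegral : (∫⁻ r in Ioi (0:ℝ), ENNReal.ofReal (r * K0 r)) = 1 := by
  have hswap : (∫⁻ p, φ p ∂((volume.restrict (Ioi (0:ℝ))).prod (volume.restrict (Ioi (1:ℝ)))))
      = ∫⁻ r in Ioi (0:ℝ), ∫⁻ t in Ioi (1:ℝ), φ (r, t) :=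
    lintegral_prod _ φ_meas.aemeasurable
  have hg_meas : Measurable (fun r : ℝ => ∫⁻ t in Ioi (1:ℝ), φ (r, t)) :=
    φ_meas.lintegral_prod_right'
  have hfin : ∀ᵐ r ∂(volume.restrict (Ioi (0:ℝ))), (∫⁻ t in Ioi (1:ℝ), φ (r, t)) < ⊤ := by
    apply ae_lt_top hg_meas
    rw [← hswap, L_eq_one]
    exact one_ne_top
  have hmem : ∀ᵐ r ∂(volume.restrict (Ioi (0:ℝ))), r ∈ Ioi (0:ℝ) :=
    ae_restrict_mem measurableSet_Ioi
  have key : ∀ᵐ r ∂(volume.restrict (Ioi (0:ℝ))),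
      ENNReal.ofReal (r * K0 r) = ∫⁻ t in Ioi (1:ℝ), φ (r, t) := by
    filter_upwards [hfin, hmem] with r hrfin hr
    have hr0 : (0:ℝ) < r := hr
    have hmeas_t : Measurable (fun t : ℝ => Real.exp (-r * t) / Real.sqrt (t ^ 2 - 1)) :=
      by fun_prop
    have hsplit := φ_split hr0
    have hIfin : (∫⁻ t in Ioi (1:ℝ),
        ENNReal.ofReal (Real.exp (-r * t) / Real.sqrt (t ^ 2 - 1))) < ⊤ := by
      rw [hsplit] at hrfin
      by_contra h
      rw [not_lt, top_le_iff] at h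
      rw [h, ENNReal.mul_top (by simp [hr0])] at hrfin
      exact absurd hrfin (lt_irrefl _)
    have hint : IntegrableOn (fun t : ℝ => Real.exp (-r * t) / Real.sqrt (t ^ 2 - 1))
        (Ioi 1) volume := by
      refine ⟨hmeas_t.aestronglyMeasurable, ?_⟩
      rw [hasFiniteIntegral_iff_ofReal (Filter.Eventually.of_forall fun t => by positivity)]
      exact hIfin
    have hK0 : ENNReal.ofReal (K0 r) = ∫⁻ t in Ioi (1:ℝ),
        ENNReal.ofReal (Real.exp (-r * t) / Real.sqrt (t ^ 2 - 1)) :=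
      ofReal_integral_eq_lintegral_ofReal hint
        (Filter.Eventually.of_forall fun t => by positivity)
    rw [hsplit, ← hK0, ← ENNReal.ofReal_mul hr0.le]
  calc (∫⁻ r in Ioi (0:ℝ), ENNReal.ofReal (r * K0 r))
      = ∫⁻ r in Ioi (0:ℝ), ∫⁻ t in Ioi (1:ℝ), φ (r, t) := lintegral_congr_ae key
    _ = 1 := by rw [← hswap, L_eq_one]

lemma eNorm2_meas : Measurable eNorm2 := by unfold eNorm2; fun_prop

lemma eNorm2_polar {p : ℝ × ℝ} (hp : 0 < p.1) : eNorm2 (polarCoord.symm p) = p.1 := by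
  rw [polarCoord_symm_apply]
  unfold eNorm2
  rw [show (p.1 * Real.cos p.2) ^ 2 + (p.1 * Real.sin p.2) ^ 2
      = p.1 ^ 2 * ((Real.sin p.2) ^ 2 + (Real.cos p.2) ^ 2) by ring,
    Real.sin_sq_add_cos_sq, mul_one, Real.sqrt_sq hp.le]

lemma plane_lintegral :
    (∫⁻ x : ℝ × ℝ, ENNReal.ofReal (K0 (eNorm2 x))) = ENNReal.ofReal (2 * π) := by
  set B : ℝ × ℝ → ℝ × ℝ →L[ℝ] ℝ × ℝ := fun p =>
    LinearMap.toContinuousLinearMap (Matrix.toLin (Module.Basis.finTwoProd ℝ) (Module.Basis.finTwoProd ℝ)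
      !![Real.cos p.2, -p.1 * Real.sin p.2; Real.sin p.2, p.1 * Real.cos p.2]) with hB
  have B_det : ∀ p, (B p).det = p.1 := by
    intro p
    conv_rhs => rw [← one_mul p.1, ← Real.cos_sq_add_sin_sq p.2]
    simp only [hB, neg_mul, LinearMap.det_toContinuousLinearMap, LinearMap.det_toLin,
      Matrix.det_fin_two_of, sub_neg_eq_add]
    ring
  have hg : Measurable (fun x : ℝ × ℝ => ENNReal.ofReal (K0 (eNorm2 x))) :=
    (K0_meas.measurable.comp eNorm2_meas).ennreal_ofReal
  calc (∫⁻ x : ℝ × ℝ, ENNReal.ofReal (K0 (eNorm2 x)))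
      = ∫⁻ x in polarCoord.source, ENNReal.ofReal (K0 (eNorm2 x)) := by
        rw [← setLIntegral_univ]
        exact (setLIntegral_congr polarCoord_source_ae_eq_univ).symm
    _ = ∫⁻ p in polarCoord.target,
          ENNReal.ofReal |(B p).det| * ENNReal.ofReal (K0 (eNorm2 (polarCoord.symm p))) := by
        rw [← polarCoord.symm_image_target_eq_source]
        exact lintegral_image_eq_lintegral_abs_det_fderiv_mul volume
          polarCoord.open_target.measurableSet
          (fun p _ => (hasFDerivAt_polarCoord_symm p).hasFDerivWithinAt)
          polarCoord.symm.injOn _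
    _ = ∫⁻ p in polarCoord.target, ENNReal.ofReal (p.1 * K0 p.1) := by
        apply setLIntegral_congr_fun polarCoord.open_target.measurableSet
        intro p hp
        have hp1 : 0 < p.1 := hp.1
        beta_reduce
        rw [B_det, abs_of_pos hp1, eNorm2_polar hp1, ENNReal.ofReal_mul hp1.le]
    _ = ENNReal.ofReal (2 * π) := by
        rw [polarCoord_target, MeasureTheory.Measure.volume_eq_prod, ← Measure.prod_restrict,
          lintegral_prod _ ((show Measurable (fun p : ℝ × ℝ => ENNReal.ofReal (p.1 * K0 p.1)) from (measurable_fst.mul (K0_meas.measurable.comp measurable_fst)).ennreal_ofReal).aemeasurable)]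
        calc (∫⁻ r in Ioi (0:ℝ), ∫⁻ _ in Ioo (-π) π, ENNReal.ofReal (r * K0 r))
            = ∫⁻ r in Ioi (0:ℝ), ENNReal.ofReal (r * K0 r) * ENNReal.ofReal (2 * π) := by
              apply lintegral_congr
              intro r
              rw [setLIntegral_const, Real.volume_Ioo]
              congr 1
              ring_nf
          _ = 1 * ENNReal.ofReal (2 * π) := by
              rw [lintegral_mul_const _ (show Measurable (fun r : ℝ => ENNReal.ofReal (r * K0 r)) from (measurable_id.mul K0_meas.measurable).ennreal_ofReal), key_lintegral]
          _ = ENNReal.ofReal (2 * π) := one_mul _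

/-- `x ↦ K₀(|x|)` is integrable on `ℝ²` with integral `2π`; equivalently,
`r ↦ r·K₀(r)` is integrable on `(0,∞)` with integral `1`. -/
theorem K0_integral_on_plane :
    Integrable (fun x : ℝ × ℝ => K0 (eNorm2 x)) volume ∧
    (∫ x : ℝ × ℝ, K0 (eNorm2 x)) = 2 * π ∧
    IntegrableOn (fun r : ℝ => r * K0 r) (Set.Ioi 0) volume ∧
    (∫ r in Set.Ioi (0 : ℝ), r * K0 r) = 1 := by
  have hnn1 : 0 ≤ᵐ[volume.restrict (Ioi (0:ℝ))] fun r : ℝ => r * K0 r := by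
    filter_upwards [ae_restrict_mem (measurableSet_Ioi (a := (0:ℝ)))] with r hr
    exact mul_nonneg (le_of_lt hr) (K0_nonneg r)
  have hnn2 : 0 ≤ᵐ[volume (α := ℝ × ℝ)] fun x : ℝ × ℝ => K0 (eNorm2 x) :=
    Filter.Eventually.of_forall fun x => K0_nonneg _
  have hm1 : AEStronglyMeasurable (fun r : ℝ => r * K0 r) (volume.restrict (Ioi (0:ℝ))) :=
    (measurable_id.mul K0_meas.measurable).aestronglyMeasurable
  have hm2 : AEStronglyMeasurable (fun x : ℝ × ℝ => K0 (eNorm2 x)) volume :=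
    (K0_meas.measurable.comp eNorm2_meas).aestronglyMeasurable
  refine ⟨⟨hm2, ?_⟩, ?_, ⟨hm1, ?_⟩, ?_⟩
  · rw [hasFiniteIntegral_iff_ofReal hnn2, plane_lintegral]
    exact ENNReal.ofReal_lt_top
  · rw [integral_eq_lintegral_of_nonneg_ae hnn2 hm2, plane_lintegral,
      ENNReal.toReal_ofReal (by positivity)]
  · rw [hasFiniteIntegral_iff_ofReal hnn1, key_lintegral]
    exact one_lt_top
  · rw [integral_eq_lintegral_of_nonneg_ae hnn1 hm1, key_lintegral, ENNReal.toReal_one]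
end

section
/- The second term of the asymptotic expansion of K₀ at infinity has coefficient −1/8; precisely, lim_{r→∞} r·( √(2r/π)·e^{r}·K₀(r) − 1 ) = −1/8. -/
open Filter Real

section Aux

open MeasureTheory Set

lemma K0_eq_s11 {r : ℝ} (hr : 0 < r) :
    K0 r = Real.exp (-r) * ∫ s in Ioi (0:ℝ),
      Real.exp (-s) / Real.sqrt (s * (2 * r + s)) := by
  have h1 : K0 r = ∫ u in Ioi (0:ℝ), Real.exp (-r * (u + 1)) / Real.sqrt ((u+1) ^ 2 - 1) := by
    rw [K0, ← integral_indicator measurableSet_Ioi, ← integral_indicator measurableSet_Ioi,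
      ← integral_add_right_eq_self
        (fun x => (Ioi (1:ℝ)).indicator (fun t => Real.exp (-r * t) / Real.sqrt (t ^ 2 - 1)) x) 1]
    congr 1
    ext x
    by_cases h : x ∈ Ioi (0:ℝ)
    · rw [indicator_of_mem h, indicator_of_mem (by simpa using h)]
    · rw [indicator_of_notMem h, indicator_of_notMem (by simpa using h)]
  have h2 := integral_comp_mul_right_Ioi
    (fun u => Real.exp (-r * (u + 1)) / Real.sqrt ((u+1) ^ 2 - 1)) 0 (inv_pos.mpr hr)
  simp only [zero_mul, inv_inv, smul_eq_mul] at h2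
  have h2' : (∫ u in Ioi (0:ℝ), Real.exp (-r * (u + 1)) / Real.sqrt ((u+1) ^ 2 - 1))
      = r⁻¹ * ∫ x in Ioi (0:ℝ),
        Real.exp (-r * (x * r⁻¹ + 1)) / Real.sqrt ((x * r⁻¹ + 1) ^ 2 - 1) := by
    rw [h2]; field_simp
  rw [h1, h2', ← integral_const_mul, ← integral_const_mul]
  refine setIntegral_congr_fun measurableSet_Ioi (fun s hs => ?_)
  have hs0 : (0:ℝ) < s := hs
  have key : (s * r⁻¹ + 1) ^ 2 - 1 = (s * (2 * r + s)) / r ^ 2 := by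
    field_simp; ring
  have h3 : Real.sqrt ((s * r⁻¹ + 1) ^ 2 - 1) = Real.sqrt (s * (2 * r + s)) / r := by
    rw [key, Real.sqrt_div (by positivity), Real.sqrt_sq hr.le]
  have h4 : -r * (s * r⁻¹ + 1) = -s + -r := by field_simp; ring
  rw [h3, h4, Real.exp_add]
  have hsq : (0:ℝ) < Real.sqrt (s * (2 * r + s)) := Real.sqrt_pos.mpr (by positivity)
  field_simp

lemma gamma_half : ∫ s in Ioi (0:ℝ), Real.exp (-s) / Real.sqrt s = Real.sqrt π := by
  have h := Real.Gamma_eq_integral (by norm_num : (0:ℝ) < 1/2)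
  rw [Real.Gamma_one_half_eq] at h
  rw [h]
  refine setIntegral_congr_fun measurableSet_Ioi (fun s hs => ?_)
  have hs0 : (0:ℝ) < s := hs
  rw [show (1/2 : ℝ) - 1 = -(1/2) from by norm_num, Real.rpow_neg hs0.le,
    ← Real.sqrt_eq_rpow, div_eq_mul_inv]

lemma gamma_three_half : ∫ s in Ioi (0:ℝ), Real.exp (-s) * Real.sqrt s = Real.sqrt π / 2 := by
  have h := Real.Gamma_eq_integral (by norm_num : (0:ℝ) < 3/2)
  have h2 : Real.Gamma (3/2) = Real.sqrt π / 2 := by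
    rw [show (3/2:ℝ) = 1/2 + 1 from by norm_num, Real.Gamma_add_one (by norm_num),
      Real.Gamma_one_half_eq]
    ring
  rw [h2] at h
  rw [h]
  refine setIntegral_congr_fun measurableSet_Ioi (fun s hs => ?_)
  have hs0 : (0:ℝ) < s := hs
  rw [show (3/2 : ℝ) - 1 = 1/2 from by norm_num, ← Real.sqrt_eq_rpow]

lemma integrable_base : IntegrableOn (fun s => Real.exp (-s) / Real.sqrt s) (Ioi (0:ℝ)) := by
  have h := Real.GammaIntegral_convergent (by norm_num : (0:ℝ) < 1/2)
  refine h.congr_fun (fun s hs => ?_) measurableSet_Ioi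
  have hs0 : (0:ℝ) < s := hs
  beta_reduce
  rw [show (1/2 : ℝ) - 1 = -(1/2) from by norm_num, Real.rpow_neg hs0.le,
    ← Real.sqrt_eq_rpow, div_eq_mul_inv]

lemma integrable_base' : IntegrableOn (fun s => Real.exp (-s) * Real.sqrt s) (Ioi (0:ℝ)) := by
  have h := Real.GammaIntegral_convergent (by norm_num : (0:ℝ) < 3/2)
  refine h.congr_fun (fun s hs => ?_) measurableSet_Ioi
  have hs0 : (0:ℝ) < s := hs
  beta_reduce
  rw [show (3/2 : ℝ) - 1 = 1/2 from by norm_num, ← Real.sqrt_eq_rpow]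

lemma integrable1 {r : ℝ} (hr : 0 < r) :
    IntegrableOn (fun s => Real.exp (-s) / Real.sqrt (s * (2 * r + s))) (Ioi (0:ℝ)) := by
  refine Integrable.mono' (integrable_base.const_mul ((Real.sqrt (2*r))⁻¹)) ?_ ?_
  · apply Measurable.aestronglyMeasurable
    fun_prop
  · filter_upwards [ae_restrict_mem measurableSet_Ioi] with s hs
    have hs0 : (0:ℝ) < s := hs
    rw [Real.norm_eq_abs, abs_of_nonneg (by positivity)]
    have hd : Real.sqrt s * Real.sqrt (2*r) ≤ Real.sqrt (s * (2*r + s)) := by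
      rw [← Real.sqrt_mul hs0.le]
      apply Real.sqrt_le_sqrt
      nlinarith
    calc Real.exp (-s) / Real.sqrt (s * (2*r+s))
        ≤ Real.exp (-s) / (Real.sqrt s * Real.sqrt (2*r)) := by
          apply div_le_div_of_nonneg_left (by positivity) (by positivity) hd
      _ = (Real.sqrt (2*r))⁻¹ * (Real.exp (-s) / Real.sqrt s) := by
          rw [div_mul_eq_div_div]; ring

lemma integrable2 : IntegrableOn (fun s => Real.exp (-s) / Real.sqrt (π * s)) (Ioi (0:ℝ)) := by
  have : ∀ s ∈ Ioi (0:ℝ), Real.exp (-s) / Real.sqrt (π * s)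
      = (Real.sqrt π)⁻¹ * (Real.exp (-s) / Real.sqrt s) := by
    intro s hs
    rw [Real.sqrt_mul pi_pos.le, div_mul_eq_div_div, div_div, mul_comm,
      ← div_div, div_eq_mul_inv (_ / _)]
    ring
  exact IntegrableOn.congr_fun (integrable_base.const_mul ((Real.sqrt π)⁻¹))
    (fun s hs => (this s hs).symm) measurableSet_Ioi

lemma int_two : ∫ s in Ioi (0:ℝ), Real.exp (-s) / Real.sqrt (π * s) = 1 := by
  have : ∀ s ∈ Ioi (0:ℝ), Real.exp (-s) / Real.sqrt (π * s)
      = (Real.sqrt π)⁻¹ * (Real.exp (-s) / Real.sqrt s) := by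
    intro s hs
    rw [Real.sqrt_mul pi_pos.le, div_mul_eq_div_div, div_div, mul_comm,
      ← div_div, div_eq_mul_inv (_ / _)]
    ring
  rw [setIntegral_congr_fun measurableSet_Ioi this, integral_const_mul, gamma_half,
    inv_mul_cancel₀ (by positivity)]

noncomputable def Gf (r s : ℝ) : ℝ :=
  r * (Real.sqrt (2*r/π) * (Real.exp (-s) / Real.sqrt (s*(2*r+s)))
    - Real.exp (-s) / Real.sqrt (π*s))

lemma G_eq {r s : ℝ} (hr : 0 < r) (hs : 0 < s) :
    Gf r s = (Real.exp (-s) / (Real.sqrt π * Real.sqrt s)) *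
      (-s / (Real.sqrt (2 + s/r) * (Real.sqrt 2 + Real.sqrt (2 + s/r)))) := by
  have e1 : Real.sqrt (2*r/π) = Real.sqrt (2*r) / Real.sqrt π :=
    Real.sqrt_div (by positivity) _
  have e2 : Real.sqrt (s*(2*r+s)) = Real.sqrt s * Real.sqrt (2*r+s) :=
    Real.sqrt_mul hs.le _
  have e3 : Real.sqrt (π*s) = Real.sqrt π * Real.sqrt s := Real.sqrt_mul pi_pos.le _
  have e4 : Real.sqrt (2 + s/r) = Real.sqrt (2*r+s) / Real.sqrt r := by
    rw [show (2 + s/r) = (2*r+s)/r from by field_simp, Real.sqrt_div (by positivity)]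
  have e5 : Real.sqrt 2 = Real.sqrt (2*r) / Real.sqrt r := by
    rw [Real.sqrt_mul (by norm_num : (0:ℝ) ≤ 2) r,
      mul_div_cancel_right₀ _ (Real.sqrt_ne_zero'.mpr hr)]
  rw [Gf, e1, e2, e3, e4, e5]
  set a := Real.sqrt (2*r) with ha_def
  set b := Real.sqrt (2*r+s) with hb_def
  set u := Real.sqrt r with hu_def
  set p := Real.sqrt π with hp_def
  set q := Real.sqrt s with hq_def
  have ha : a^2 = 2*r := Real.sq_sqrt (by positivity)
  have hb : b^2 = 2*r+s := Real.sq_sqrt (by positivity)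
  have hu : u^2 = r := Real.sq_sqrt hr.le
  have ha0 : 0 < a := Real.sqrt_pos.mpr (by positivity)
  have hb0 : 0 < b := Real.sqrt_pos.mpr (by positivity)
  have hu0 : 0 < u := Real.sqrt_pos.mpr hr
  have hp0 : 0 < p := Real.sqrt_pos.mpr pi_pos
  have hq0 : 0 < q := Real.sqrt_pos.mpr hs
  have hab0 : 0 < a + b := by positivity
  field_simp
  linear_combination r * ha
    - r * hb + s * hu

lemma phi_bound {s x : ℝ} (hs : 0 < s) (hx : 0 ≤ x) :
    |(-s / (Real.sqrt (2 + x) * (Real.sqrt 2 + Real.sqrt (2 + x))))| ≤ s / 4 := by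
  have h2 : Real.sqrt 2 ≤ Real.sqrt (2 + x) := Real.sqrt_le_sqrt (by linarith)
  have h20 : 0 < Real.sqrt 2 := Real.sqrt_pos.mpr (by norm_num)
  have hd : (4:ℝ) ≤ Real.sqrt (2 + x) * (Real.sqrt 2 + Real.sqrt (2 + x)) := by
    have h4 : Real.sqrt 2 * (Real.sqrt 2 + Real.sqrt 2) = 4 := by
      have := Real.mul_self_sqrt (by norm_num : (0:ℝ) ≤ 2)
      nlinarith
    nlinarith
  rw [abs_div, abs_neg, abs_of_nonneg hs.le, abs_of_nonneg (by nlinarith)]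
  apply div_le_div_of_nonneg_left hs.le (by norm_num) hd

lemma phi_tendsto {s : ℝ} (hs : 0 < s) :
    Tendsto (fun r : ℝ => -s / (Real.sqrt (2 + s/r) * (Real.sqrt 2 + Real.sqrt (2 + s/r))))
      atTop (nhds (-s / 4)) := by
  have h0 : Tendsto (fun r : ℝ => s / r) atTop (nhds 0) := by
    simpa [div_eq_mul_inv] using tendsto_inv_atTop_zero.const_mul s
  have hcont : ContinuousAt
      (fun x : ℝ => -s / (Real.sqrt (2 + x) * (Real.sqrt 2 + Real.sqrt (2 + x)))) 0 := by
    have hden : Real.sqrt (2 + (0:ℝ)) * (Real.sqrt 2 + Real.sqrt (2 + (0:ℝ))) ≠ 0 := by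
      rw [add_zero]
      positivity
    exact ContinuousAt.div continuousAt_const (by fun_prop) hden
  have hcomp := hcont.tendsto.comp h0
  have h4 : Real.sqrt (2 + (0:ℝ)) * (Real.sqrt 2 + Real.sqrt (2 + (0:ℝ))) = 4 := by
    rw [add_zero]
    have := Real.mul_self_sqrt (by norm_num : (0:ℝ) ≤ 2)
    nlinarith
  rw [h4] at hcomp
  exact hcomp

lemma c_mul_quarter {s : ℝ} (hs : 0 < s) :
    Real.exp (-s) / (Real.sqrt π * Real.sqrt s) * (-s / 4)
      = -(Real.exp (-s) * Real.sqrt s / (4 * Real.sqrt π)) := by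
  have hq : Real.sqrt s * Real.sqrt s = s := Real.mul_self_sqrt hs.le
  have hq0 : (0:ℝ) < Real.sqrt s := Real.sqrt_pos.mpr hs
  have hp0 : (0:ℝ) < Real.sqrt π := Real.sqrt_pos.mpr pi_pos
  field_simp
  linear_combination hq

lemma eq_int {r : ℝ} (hr : 0 < r) :
    r * (Real.sqrt (2 * r / π) * Real.exp r * K0 r - 1) = ∫ s in Ioi (0:ℝ), Gf r s := by
  rw [K0_eq_s11 hr]
  have hI : Real.sqrt (2 * r / π) * Real.exp r *
      (Real.exp (-r) * ∫ s in Ioi (0:ℝ), Real.exp (-s) / Real.sqrt (s * (2 * r + s)))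
      = Real.sqrt (2 * r / π) * ∫ s in Ioi (0:ℝ), Real.exp (-s) / Real.sqrt (s * (2 * r + s)) := by
    rw [Real.exp_neg]
    field_simp
  rw [hI, ← int_two, ← integral_const_mul (Real.sqrt (2 * r / π)), ← integral_sub
    ((integrable1 hr).const_mul _) integrable2, ← integral_const_mul r]
  rfl

end Aux

/-- The second term of the asymptotic expansion of `K₀` at infinity has
coefficient `−1/8`: `r·(√(2r/π)·e^r·K₀(r) − 1) → −1/8` as `r → ∞`. -/
theorem K0_asymptotic_second_term :
    Tendsto (fun r : ℝ => r * (Real.sqrt (2 * r / π) * Real.exp r * K0 r - 1)) atTop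
      (nhds (-1 / 8)) := by
  open MeasureTheory Set in
  have hmain : Tendsto (fun r : ℝ => ∫ s in Ioi (0:ℝ), Gf r s) atTop
      (nhds (∫ s in Ioi (0:ℝ), -(Real.exp (-s) * Real.sqrt s / (4 * Real.sqrt π)))) := by
    apply tendsto_integral_filter_of_dominated_convergence
      (fun s => Real.exp (-s) * Real.sqrt s / (4 * Real.sqrt π))
    · filter_upwards with r
      apply Measurable.aestronglyMeasurable
      unfold Gf
      fun_prop
    · filter_upwards [eventually_gt_atTop (0:ℝ)] with r hr
      filter_upwards [ae_restrict_mem measurableSet_Ioi] with s hs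
      have hs0 : (0:ℝ) < s := hs
      rw [G_eq hr hs0, Real.norm_eq_abs, abs_mul, abs_of_nonneg (by positivity)]
      calc Real.exp (-s) / (Real.sqrt π * Real.sqrt s)
            * |(-s / (Real.sqrt (2 + s/r) * (Real.sqrt 2 + Real.sqrt (2 + s/r))))|
          ≤ Real.exp (-s) / (Real.sqrt π * Real.sqrt s) * (s / 4) := by
            apply mul_le_mul_of_nonneg_left (phi_bound hs0 (by positivity)) (by positivity)
        _ = Real.exp (-s) * Real.sqrt s / (4 * Real.sqrt π) := by
            have := c_mul_quarter hs0
            nlinarith [this]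
    · exact integrable_base'.div_const _
    · filter_upwards [ae_restrict_mem measurableSet_Ioi] with s hs
      have hs0 : (0:ℝ) < s := hs
      have hlim := (phi_tendsto hs0).const_mul
        (Real.exp (-s) / (Real.sqrt π * Real.sqrt s))
      rw [c_mul_quarter hs0] at hlim
      apply hlim.congr'
      filter_upwards [eventually_gt_atTop (0:ℝ)] with r hr
      exact (G_eq hr hs0).symm
  have hval : (∫ s in Ioi (0:ℝ), -(Real.exp (-s) * Real.sqrt s / (4 * Real.sqrt π)))
      = -1 / 8 := by
    rw [integral_neg]
    simp_rw [div_eq_mul_inv (Real.exp _ * _)]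
    rw [integral_mul_const, gamma_three_half]
    have hp0 : (0:ℝ) < Real.sqrt π := Real.sqrt_pos.mpr pi_pos
    field_simp
    ring
  rw [hval] at hmain
  apply hmain.congr'
  filter_upwards [eventually_gt_atTop (0:ℝ)] with r hr
  exact (eq_int hr).symm
end

section
/- Twisted Poincaré inequality with sharp constant: let ξ ∈ ℝ² and let f : ℝ² → ℂ be continuously differentiable and quasi-periodic with character ξ, i.e. f(x + m) = e^{2πi⟨ξ, m⟩}·f(x) for all x ∈ ℝ² and m ∈ ℤ². Then ∫_{[0,1]²} ‖∇f(x)‖² dx ≥ 4π²·d(ξ, ℤ²)²·∫_{[0,1]²} |f(x)|² dx, where d(ξ, ℤ²) = inf_{m ∈ ℤ²} |ξ − m| is the Euclidean distance from ξ to the lattice ℤ². In particular, if ξ ∉ ℤ², the bottom of the spectrum of the ξ-twisted Laplacian on the torus is strictly positive. -/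
open MeasureTheory Real

open AddCircle

/-- The Euclidean distance from a point of `ℝ²` to the integer lattice `ℤ²`. -/
noncomputable def latticeDist (ξ : ℝ × ℝ) : ℝ :=
  sInf {r : ℝ | ∃ m n : ℤ, r = Real.sqrt ((ξ.1 - m) ^ 2 + (ξ.2 - n) ^ 2)}


-- nearest integer
lemma round_nearest (θ : ℝ) (m : ℤ) : |θ - round θ| ≤ |θ - m| := by
  rcases eq_or_ne m (round θ) with h | h
  · rw [h]
  · have h1 : (1 : ℝ) ≤ |(m : ℝ) - round θ| := by
      have : (1 : ℤ) ≤ |m - round θ| := Int.one_le_abs (sub_ne_zero.2 h)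
      exact_mod_cast this.trans_eq (by push_cast [Int.cast_abs]; norm_num)
    have h2 : |θ - round θ| ≤ 1 / 2 := abs_sub_round θ
    have h3 : |(m : ℝ) - round θ| ≤ |θ - round θ| + |θ - m| := by
      calc |(m : ℝ) - round θ| = |(θ - round θ) - (θ - m)| := by ring_nf
        _ ≤ |θ - round θ| + |θ - m| := by
          simpa using abs_sub (θ - round θ) (θ - (m:ℝ))
    linarith

lemma key_factor (θ : ℝ) (n : ℤ) : (θ - round θ) ^ 2 ≤ ((n : ℝ) + θ) ^ 2 := by
  have h := round_nearest θ (-n)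
  have : θ - ((-n : ℤ) : ℝ) = θ + (n:ℝ) := by push_cast; ring
  rw [this] at h
  calc (θ - round θ) ^ 2 = |θ - round θ| ^ 2 := (sq_abs _).symm
    _ ≤ |θ + (n:ℝ)| ^ 2 := by gcongr <;> positivity
    _ = ((n : ℝ) + θ) ^ 2 := by rw [sq_abs]; ring

local notation "hab01" => (lt_add_of_pos_right (0:ℝ) one_pos)

lemma parseval01 (F : ℝ → ℂ) (hF : Continuous F) (hper : F 0 = F 1) :
    Summable (fun n : ℤ => ‖fourierCoeffOn hab01 F n‖ ^ 2) ∧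
    ∑' n : ℤ, ‖fourierCoeffOn hab01 F n‖ ^ 2 = ∫ t in Set.Ioc (0:ℝ) 1, ‖F t‖ ^ 2 := by
  haveI : Fact ((0:ℝ) < 1) := ⟨one_pos⟩
  set FC : C(AddCircle (1:ℝ), ℂ) :=
    ⟨AddCircle.liftIco 1 0 F, AddCircle.liftIco_zero_continuous hper hF.continuousOn⟩ with hFC
  set FL : Lp ℂ 2 (@haarAddCircle 1 _) := ContinuousMap.toLp 2 haarAddCircle ℂ FC with hFL
  have hcoeff : ∀ n : ℤ, fourierCoeff (⇑FL : AddCircle (1:ℝ) → ℂ) n = fourierCoeffOn hab01 F n := by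
    intro n
    rw [hFL, fourierCoeff_toLp]
    exact fourierCoeff_liftIco_eq F n
  constructor
  · have hs := lp.memℓp (fourierBasis.repr FL)
    rw [memℓp_gen_iff (by norm_num : 0 < (2:ENNReal).toReal)] at hs
    have : (fun n : ℤ => ‖fourierCoeffOn hab01 F n‖ ^ 2)
        = fun n : ℤ => ‖fourierBasis.repr FL n‖ ^ ((2:ENNReal).toReal) := by
      funext n
      rw [fourierBasis_repr, hcoeff n]
      rw [show ((2:ENNReal).toReal) = ((2:ℕ):ℝ) by norm_num, Real.rpow_natCast]
    rw [this]; exact hs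
  · have hpars := tsum_sq_fourierCoeff FL
    simp_rw [hcoeff] at hpars
    rw [hpars]
    -- ∫ over haar = ∫ over Ioc
    have hmeq : (@haarAddCircle 1 _) = (volume : Measure (AddCircle (1:ℝ))) := by
      rw [AddCircle.volume_eq_smul_haarAddCircle]
      simp
    have hae : ∀ᵐ t : AddCircle (1:ℝ) ∂(@haarAddCircle 1 _), ‖(⇑FL : AddCircle (1:ℝ) → ℂ) t‖ ^ 2 = ‖FC t‖ ^ 2 := by
      filter_upwards [ContinuousMap.coeFn_toLp (p := 2) haarAddCircle (𝕜 := ℂ) FC] with t ht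
      rw [hFL, ht]
    rw [integral_congr_ae hae, hmeq]
    have := (AddCircle.integral_preimage 1 0 (fun t : AddCircle (1:ℝ) => ‖FC t‖ ^ 2)).symm
    rw [this]
    rw [show (0:ℝ) + 1 = 1 by norm_num]
    refine setIntegral_congr_fun measurableSet_Ioc (fun t ht => ?_)
    have hFCval : ∀ s : ℝ, s ∈ Set.Ico (0:ℝ) 1 → FC ((s:ℝ) : AddCircle (1:ℝ)) = F s := by
      intro s hs
      show AddCircle.liftIco 1 0 F _ = F s
      exact AddCircle.liftIco_coe_apply (by simpa using hs)
    rcases eq_or_lt_of_le ht.2 with h1 | h1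
    · subst h1
      have e0 : ((1:ℝ) : AddCircle (1:ℝ)) = ((0:ℝ) : AddCircle (1:ℝ)) := by
        simpa using AddCircle.coe_add_period (1:ℝ) 0
      rw [e0, hFCval 0 (by norm_num), hper]
    · rw [hFCval t ⟨le_of_lt ht.1, h1⟩]

lemma wirtinger1D (θ : ℝ) (g : ℝ → ℂ) (hg : ContDiff ℝ 1 g)
    (hq : ∀ t : ℝ, g (t + 1) = Complex.exp (2 * (π:ℂ) * Complex.I * (θ:ℂ)) * g t) :
    4 * π ^ 2 * (θ - round θ) ^ 2 * ∫ t in Set.Icc (0:ℝ) 1, ‖g t‖ ^ 2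
      ≤ ∫ t in Set.Icc (0:ℝ) 1, ‖deriv g t‖ ^ 2 := by
  have hgd : Differentiable ℝ g := hg.differentiable one_ne_zero
  have hg'c : Continuous (deriv g) := (contDiff_one_iff_deriv.mp hg).2
  set c : ℂ := 2 * (π:ℂ) * Complex.I * (θ:ℂ) with hc
  have hexp : Complex.exp (-c) * Complex.exp c = 1 := by rw [← Complex.exp_add]; simp
  have hq' : ∀ t : ℝ, deriv g (t + 1) = Complex.exp c * deriv g t := by
    intro t
    have h1 : deriv (fun s : ℝ => g (s + 1)) t = deriv g (t + 1) := deriv_comp_add_const g 1 t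
    have h2 : (fun s : ℝ => g (s + 1)) = fun s => Complex.exp c * g s := funext hq
    rw [h2] at h1
    rw [← h1, deriv_const_mul _ (hgd t)]
  set h : ℝ → ℂ := fun t => Complex.exp (-c * t) * g t with hh
  set h' : ℝ → ℂ := fun t => Complex.exp (-c * t) * (deriv g t - c * g t) with hh'
  set H : ℝ → ℂ := fun t => Complex.exp (-c * t) * deriv g t with hH
  have hec : ∀ t : ℝ, HasDerivAt (fun s : ℝ => Complex.exp (-c * s)) (-c * Complex.exp (-c * t)) t := by
    intro t
    have h0 : HasDerivAt (fun s : ℝ => ((s : ℂ))) 1 t := by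
      simpa using (hasDerivAt_id t).ofReal_comp
    have h1 : HasDerivAt (fun s : ℝ => -c * (s:ℂ)) (-c) t := by simpa using h0.const_mul (-c)
    simpa [mul_comm] using h1.cexp
  have hhd : ∀ t : ℝ, HasDerivAt h (h' t) t := by
    intro t
    have := (hec t).mul (hgd t).hasDerivAt
    refine this.congr_deriv ?_
    simp only [hh']
    ring
  have hcexp : Continuous fun t : ℝ => Complex.exp (-c * t) :=
    Complex.continuous_exp.comp (continuous_const.mul Complex.continuous_ofReal)
  have hhc : Continuous h := hcexp.mul hgd.continuous
  have hh'c : Continuous h' := hcexp.mul (hg'c.sub (continuous_const.mul hgd.continuous))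
  have hHc : Continuous H := hcexp.mul hg'c
  have hmul : ∀ t : ℝ, Complex.exp (-c * ((t:ℂ) + 1)) = Complex.exp (-c * t) * Complex.exp (-c) := by
    intro t; rw [← Complex.exp_add]; ring_nf
  have hper : ∀ t : ℝ, h (t + 1) = h t := by
    intro t
    simp only [hh]
    rw [hq t]
    push_cast
    rw [hmul t, show Complex.exp (-c*t) * Complex.exp (-c) * (Complex.exp c * g t)
        = Complex.exp (-c*t) * (Complex.exp (-c) * Complex.exp c) * g t by ring, hexp, mul_one]
  have hHper : ∀ t : ℝ, H (t + 1) = H t := by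
    intro t
    simp only [hH]
    rw [hq' t]
    push_cast
    rw [hmul t, show Complex.exp (-c*t) * Complex.exp (-c) * (Complex.exp c * deriv g t)
        = Complex.exp (-c*t) * (Complex.exp (-c) * Complex.exp c) * deriv g t by ring, hexp, mul_one]
  have hne : ∀ t : ℝ, ‖Complex.exp (-c * t)‖ = 1 := by
    intro t
    rw [show -c * (t:ℂ) = ((-(2*π*θ*t) : ℝ) : ℂ) * Complex.I by rw [hc]; push_cast; ring]
    exact Complex.norm_exp_ofReal_mul_I _
  have hnh : ∀ t : ℝ, ‖h t‖ = ‖g t‖ := by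
    intro t; simp only [hh]; rw [norm_mul, hne, one_mul]
  have hnH : ∀ t : ℝ, ‖H t‖ = ‖deriv g t‖ := by
    intro t; simp only [hH]; rw [norm_mul, hne, one_mul]
  -- Fourier coefficient of the derivative
  have hbd : h (0 + 1) - h 0 = 0 := by rw [hper 0, sub_self]
  have hder : ∀ n : ℤ, fourierCoeffOn hab01 h' n
      = 2 * (π:ℂ) * Complex.I * (n:ℂ) * fourierCoeffOn hab01 h n := by
    intro n
    rcases eq_or_ne n 0 with rfl | hn
    · simp only [Int.cast_zero, mul_zero, zero_mul]
      rw [fourierCoeffOn_eq_integral]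
      simp only [neg_zero, fourier_zero, one_smul]
      rw [intervalIntegral.integral_eq_sub_of_hasDerivAt
          (fun t _ => hhd t) (hh'c.intervalIntegrable _ _)]
      rw [hper 0, sub_self, smul_zero]
    · have key := fourierCoeffOn_of_hasDerivAt hab01 hn
        (fun x _ => hhd x) (hh'c.intervalIntegrable _ _)
      rw [hbd, mul_zero, zero_sub] at key
      rw [key]
      have hπ : (π:ℂ) ≠ 0 := Complex.ofReal_ne_zero.mpr Real.pi_ne_zero
      have hnn : (n:ℂ) ≠ 0 := Int.cast_ne_zero.mpr hn
      have hI : Complex.I ≠ 0 := Complex.I_ne_zero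
      push_cast
      field_simp
      ring
  -- linearity
  have hHdecomp : H = fun t => h' t + c * h t := by
    funext t; simp only [hh', hh, hH]; ring
  have hdf : ∀ n : ℤ, fourierCoeffOn hab01 H n
      = fourierCoeffOn hab01 h' n + c * fourierCoeffOn hab01 h n := by
    intro n
    rw [hHdecomp]
    rw [fourierCoeffOn_eq_integral, fourierCoeffOn_eq_integral, fourierCoeffOn_eq_integral]
    have hsplit : ∀ x : ℝ, (fourier (-n) (x : AddCircle ((0:ℝ)+1-0))) • (h' x + c * h x)
        = fourier (-n) (x : AddCircle ((0:ℝ)+1-0)) • h' x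
          + c * (fourier (-n) (x : AddCircle ((0:ℝ)+1-0)) • h x) := by
      intro x; simp only [smul_eq_mul]; ring
    simp_rw [hsplit]
    have int1 : IntervalIntegrable
        (fun x : ℝ => (fourier (-n) (x : AddCircle ((0:ℝ)+1-0))) • h' x) volume 0 (0+1) :=
      (((map_continuous (fourier (-n))).comp (AddCircle.continuous_mk' _)).smul hh'c).intervalIntegrable _ _
    have int2 : IntervalIntegrable
        (fun x : ℝ => c * ((fourier (-n) (x : AddCircle ((0:ℝ)+1-0))) • h x)) volume 0 (0+1) :=
      (continuous_const.mul (((map_continuous (fourier (-n))).comp (AddCircle.continuous_mk' _)).smul hhc)).intervalIntegrable _ _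
    rw [intervalIntegral.integral_add int1 int2, intervalIntegral.integral_const_mul]
    simp only [smul_add, Complex.real_smul, smul_eq_mul]
    push_cast
    ring
  -- norm of coefficients
  have hdn : ∀ n : ℤ, ‖fourierCoeffOn hab01 H n‖^2
      = 4 * π^2 * ((n:ℝ)+θ)^2 * ‖fourierCoeffOn hab01 h n‖^2 := by
    intro n
    rw [hdf n, hder n]
    rw [show 2*(π:ℂ)*Complex.I*(n:ℂ) * fourierCoeffOn hab01 h n + c * fourierCoeffOn hab01 h n
        = (((2*π*((n:ℝ)+θ) : ℝ)):ℂ) * Complex.I * fourierCoeffOn hab01 h n by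
      rw [hc]; push_cast; ring]
    rw [norm_mul, norm_mul, Complex.norm_I, mul_one, Complex.norm_real, Real.norm_eq_abs,
      mul_pow, sq_abs]
    ring
  -- Parseval
  obtain ⟨Sh, Ph⟩ := parseval01 h hhc (by have := hper 0; rw [zero_add] at this; exact this.symm)
  obtain ⟨SH, PH⟩ := parseval01 H hHc (by have := hHper 0; rw [zero_add] at this; exact this.symm)
  have hterm : ∀ n : ℤ, 4*π^2*(θ - round θ)^2 * ‖fourierCoeffOn hab01 h n‖^2
      ≤ ‖fourierCoeffOn hab01 H n‖^2 := by
    intro n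
    rw [hdn n]
    have hk := key_factor θ n
    have h4 : (0:ℝ) ≤ 4*π^2 := by positivity
    nlinarith [sq_nonneg (‖fourierCoeffOn hab01 h n‖), mul_le_mul_of_nonneg_right hk
      (sq_nonneg (‖fourierCoeffOn hab01 h n‖))]
  have hsum : 4*π^2*(θ - round θ)^2 * ∑' n : ℤ, ‖fourierCoeffOn hab01 h n‖^2
      ≤ ∑' n : ℤ, ‖fourierCoeffOn hab01 H n‖^2 := by
    rw [← tsum_mul_left]
    exact Summable.tsum_le_tsum hterm (Sh.mul_left _) SH
  rw [Ph, PH] at hsum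
  rw [MeasureTheory.integral_Icc_eq_integral_Ioc, MeasureTheory.integral_Icc_eq_integral_Ioc]
  have e1 : ∫ t in Set.Ioc (0:ℝ) 1, ‖h t‖^2 = ∫ t in Set.Ioc (0:ℝ) 1, ‖g t‖^2 :=
    setIntegral_congr_fun measurableSet_Ioc (fun t _ => by rw [hnh])
  have e2 : ∫ t in Set.Ioc (0:ℝ) 1, ‖H t‖^2 = ∫ t in Set.Ioc (0:ℝ) 1, ‖deriv g t‖^2 :=
    setIntegral_congr_fun measurableSet_Ioc (fun t _ => by rw [hnH])
  rw [e1, e2] at hsum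
  exact hsum

lemma fub_symm (G : ℝ × ℝ → ℝ) (hG : Continuous G) :
    ∫ z in (Set.Icc (0:ℝ) 1) ×ˢ (Set.Icc (0:ℝ) 1), G z
      = ∫ y in Set.Icc (0:ℝ) 1, ∫ x in Set.Icc (0:ℝ) 1, G (x, y) := by
  have hint : Integrable G
      (((volume : Measure ℝ).restrict (Set.Icc 0 1)).prod
        ((volume : Measure ℝ).restrict (Set.Icc 0 1))) := by
    rw [Measure.prod_restrict, ← Measure.volume_eq_prod]
    exact (hG.continuousOn).integrableOn_compact (isCompact_Icc.prod isCompact_Icc)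
  calc ∫ z in (Set.Icc (0:ℝ) 1) ×ˢ (Set.Icc (0:ℝ) 1), G z
      = ∫ z, G z ∂(((volume : Measure ℝ).restrict (Set.Icc 0 1)).prod
          ((volume : Measure ℝ).restrict (Set.Icc 0 1))) := by
        rw [Measure.prod_restrict, ← Measure.volume_eq_prod]
    _ = ∫ y in Set.Icc (0:ℝ) 1, ∫ x in Set.Icc (0:ℝ) 1, G (x, y) :=
        integral_prod_symm G hint

lemma fub (G : ℝ × ℝ → ℝ) (hG : Continuous G) :
    ∫ z in (Set.Icc (0:ℝ) 1) ×ˢ (Set.Icc (0:ℝ) 1), G z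
      = ∫ x in Set.Icc (0:ℝ) 1, ∫ y in Set.Icc (0:ℝ) 1, G (x, y) := by
  have hint : Integrable G
      (((volume : Measure ℝ).restrict (Set.Icc 0 1)).prod
        ((volume : Measure ℝ).restrict (Set.Icc 0 1))) := by
    rw [Measure.prod_restrict, ← Measure.volume_eq_prod]
    exact (hG.continuousOn).integrableOn_compact (isCompact_Icc.prod isCompact_Icc)
  calc ∫ z in (Set.Icc (0:ℝ) 1) ×ˢ (Set.Icc (0:ℝ) 1), G z
      = ∫ z, G z ∂(((volume : Measure ℝ).restrict (Set.Icc 0 1)).prod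
          ((volume : Measure ℝ).restrict (Set.Icc 0 1))) := by
        rw [Measure.prod_restrict, ← Measure.volume_eq_prod]
    _ = ∫ x in Set.Icc (0:ℝ) 1, ∫ y in Set.Icc (0:ℝ) 1, G (x, y) :=
        integral_prod G hint

/-- Twisted Poincaré inequality with sharp constant: for `f : ℝ² → ℂ`
continuously differentiable and quasi-periodic with character `ξ`,
`∫_{[0,1]²} ‖∇f‖² ≥ 4π²·d(ξ,ℤ²)²·∫_{[0,1]²} |f|²`. -/
theorem twisted_poincare_inequality (ξ : ℝ × ℝ)
    (f : ℝ × ℝ → ℂ) (hf : ContDiff ℝ 1 f)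
    (hquasi : ∀ x : ℝ × ℝ, ∀ m n : ℤ,
      f (x.1 + m, x.2 + n) =
        Complex.exp (2 * π * Complex.I * (ξ.1 * m + ξ.2 * n)) * f x) :
    (∫ x in Set.Icc ((0 : ℝ), (0 : ℝ)) (1, 1),
        (‖deriv (fun t => f (t, x.2)) x.1‖ ^ 2 +
         ‖deriv (fun t => f (x.1, t)) x.2‖ ^ 2)) ≥
      4 * π ^ 2 * latticeDist ξ ^ 2 *
        ∫ x in Set.Icc ((0 : ℝ), (0 : ℝ)) (1, 1), ‖f x‖ ^ 2 := by
  rw [ge_iff_le, show Set.Icc ((0:ℝ),(0:ℝ)) ((1:ℝ),(1:ℝ))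
      = (Set.Icc (0:ℝ) 1) ×ˢ (Set.Icc (0:ℝ) 1) by rw [Set.Icc_prod_eq]]
  have hfd : Differentiable ℝ f := hf.differentiable one_ne_zero
  have hfder : Continuous (fun x : ℝ × ℝ => fderiv ℝ f x) := hf.continuous_fderiv one_ne_zero
  have hD1 : ∀ x : ℝ × ℝ, deriv (fun t => f (t, x.2)) x.1 = fderiv ℝ f x ((1:ℝ), (0:ℝ)) := by
    intro x
    have hcurve : HasDerivAt (fun t : ℝ => (t, x.2)) ((1:ℝ), (0:ℝ)) x.1 :=
      (hasDerivAt_id x.1).prodMk (hasDerivAt_const x.1 x.2)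
    have := ((hfd (x.1, x.2)).hasFDerivAt).comp_hasDerivAt x.1 hcurve
    simpa [Function.comp_def] using this.deriv
  have hD2 : ∀ x : ℝ × ℝ, deriv (fun t => f (x.1, t)) x.2 = fderiv ℝ f x ((0:ℝ), (1:ℝ)) := by
    intro x
    have hcurve : HasDerivAt (fun t : ℝ => (x.1, t)) ((0:ℝ), (1:ℝ)) x.2 :=
      (hasDerivAt_const x.2 x.1).prodMk (hasDerivAt_id x.2)
    have := ((hfd (x.1, x.2)).hasFDerivAt).comp_hasDerivAt x.2 hcurve
    simpa [Function.comp_def] using this.deriv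
  have hG1c : Continuous (fun x : ℝ × ℝ => ‖deriv (fun t => f (t, x.2)) x.1‖ ^ 2) := by
    have : (fun x : ℝ × ℝ => ‖deriv (fun t => f (t, x.2)) x.1‖ ^ 2)
        = fun x => ‖fderiv ℝ f x ((1:ℝ), (0:ℝ))‖ ^ 2 := funext fun x => by rw [hD1 x]
    rw [this]
    exact (hfder.clm_apply continuous_const).norm.pow 2
  have hG2c : Continuous (fun x : ℝ × ℝ => ‖deriv (fun t => f (x.1, t)) x.2‖ ^ 2) := by
    have : (fun x : ℝ × ℝ => ‖deriv (fun t => f (x.1, t)) x.2‖ ^ 2)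
        = fun x => ‖fderiv ℝ f x ((0:ℝ), (1:ℝ))‖ ^ 2 := funext fun x => by rw [hD2 x]
    rw [this]
    exact (hfder.clm_apply continuous_const).norm.pow 2
  have hfc : Continuous fun x : ℝ × ℝ => ‖f x‖ ^ 2 := hfd.continuous.norm.pow 2
  set A := Set.Icc (0:ℝ) 1 with hA
  have hAm : MeasurableSet A := measurableSet_Icc
  have hJ0 : (0:ℝ) ≤ ∫ z in A ×ˢ A, ‖f z‖ ^ 2 :=
    setIntegral_nonneg (hAm.prod hAm) (fun z _ => by positivity)
  -- slice integrability
  have hslice_int : ∀ (F : ℝ → ℝ), Continuous F → IntegrableOn F A volume := fun F hF =>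
    hF.continuousOn.integrableOn_compact isCompact_Icc
  -- key 1
  have key1 : 4 * π ^ 2 * (ξ.1 - round ξ.1) ^ 2 * ∫ z in A ×ˢ A, ‖f z‖ ^ 2
      ≤ ∫ z in A ×ˢ A, ‖deriv (fun t => f (t, z.2)) z.1‖ ^ 2 := by
    set c1 := 4 * π ^ 2 * (ξ.1 - round ξ.1) ^ 2 with hc1
    have hGc : Continuous (fun z : ℝ × ℝ =>
        ‖deriv (fun t => f (t, z.2)) z.1‖ ^ 2 - c1 * ‖f z‖ ^ 2) :=
      hG1c.sub (continuous_const.mul hfc)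
    have hfub := fub_symm _ hGc
    have hsplit : ∫ z in A ×ˢ A, (‖deriv (fun t => f (t, z.2)) z.1‖ ^ 2 - c1 * ‖f z‖ ^ 2)
        = (∫ z in A ×ˢ A, ‖deriv (fun t => f (t, z.2)) z.1‖ ^ 2)
          - c1 * ∫ z in A ×ˢ A, ‖f z‖ ^ 2 := by
      rw [integral_sub (hG1c.continuousOn.integrableOn_compact (isCompact_Icc.prod isCompact_Icc))
        ((show Continuous fun z : ℝ × ℝ => c1 * ‖f z‖ ^ 2 from continuous_const.mul hfc).continuousOn.integrableOn_compact
          (isCompact_Icc.prod isCompact_Icc)),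
        integral_const_mul]
    have hinner : ∀ y ∈ A, (0:ℝ) ≤ ∫ x in A,
        (‖deriv (fun t => f (t, (x, y).2)) (x, y).1‖ ^ 2 - c1 * ‖f (x, y)‖ ^ 2) := by
      intro y _
      have hgslice : ContDiff ℝ 1 (fun t : ℝ => f (t, y)) :=
        hf.comp (contDiff_id.prodMk contDiff_const)
      have hqs : ∀ t : ℝ, f (t + 1, y) = Complex.exp (2 * (π:ℂ) * Complex.I * (ξ.1:ℂ)) * f (t, y) := by
        intro t
        have := hquasi (t, y) 1 0
        simpa using this
      have hw := wirtinger1D ξ.1 (fun t => f (t, y)) hgslice hqs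
      have hi1 : IntegrableOn (fun x : ℝ => ‖deriv (fun t => f (t, y)) x‖ ^ 2) A volume := by
        apply hslice_int
        have : (fun x : ℝ => ‖deriv (fun t => f (t, y)) x‖ ^ 2)
            = fun x : ℝ => ‖fderiv ℝ f (x, y) ((1:ℝ), (0:ℝ))‖ ^ 2 :=
          funext fun x => by rw [hD1 (x, y)]
        rw [this]
        exact (((hfder.comp (continuous_id.prodMk continuous_const)).clm_apply
          continuous_const).norm.pow 2)
      have hi2 : IntegrableOn (fun x : ℝ => c1 * ‖f (x, y)‖ ^ 2) A volume := by
        apply hslice_int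
        exact continuous_const.mul ((hfd.continuous.comp
          (continuous_id.prodMk continuous_const)).norm.pow 2)
      rw [integral_sub hi1 hi2, integral_const_mul, sub_nonneg]
      exact hw
    have h0 : (0:ℝ) ≤ ∫ y in A, ∫ x in A,
        (‖deriv (fun t => f (t, (x, y).2)) (x, y).1‖ ^ 2 - c1 * ‖f (x, y)‖ ^ 2) :=
      setIntegral_nonneg hAm hinner
    rw [← hfub] at h0
    rw [hsplit] at h0
    linarith
  -- key 2
  have key2 : 4 * π ^ 2 * (ξ.2 - round ξ.2) ^ 2 * ∫ z in A ×ˢ A, ‖f z‖ ^ 2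
      ≤ ∫ z in A ×ˢ A, ‖deriv (fun t => f (z.1, t)) z.2‖ ^ 2 := by
    set c2 := 4 * π ^ 2 * (ξ.2 - round ξ.2) ^ 2 with hc2
    have hGc : Continuous (fun z : ℝ × ℝ =>
        ‖deriv (fun t => f (z.1, t)) z.2‖ ^ 2 - c2 * ‖f z‖ ^ 2) :=
      hG2c.sub (continuous_const.mul hfc)
    have hfub := fub _ hGc
    have hsplit : ∫ z in A ×ˢ A, (‖deriv (fun t => f (z.1, t)) z.2‖ ^ 2 - c2 * ‖f z‖ ^ 2)
        = (∫ z in A ×ˢ A, ‖deriv (fun t => f (z.1, t)) z.2‖ ^ 2)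
          - c2 * ∫ z in A ×ˢ A, ‖f z‖ ^ 2 := by
      rw [integral_sub (hG2c.continuousOn.integrableOn_compact (isCompact_Icc.prod isCompact_Icc))
        ((show Continuous fun z : ℝ × ℝ => c2 * ‖f z‖ ^ 2 from continuous_const.mul hfc).continuousOn.integrableOn_compact
          (isCompact_Icc.prod isCompact_Icc)),
        integral_const_mul]
    have hinner : ∀ x ∈ A, (0:ℝ) ≤ ∫ y in A,
        (‖deriv (fun t => f ((x, y).1, t)) (x, y).2‖ ^ 2 - c2 * ‖f (x, y)‖ ^ 2) := by
      intro x _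
      have hgslice : ContDiff ℝ 1 (fun t : ℝ => f (x, t)) :=
        hf.comp (contDiff_const.prodMk contDiff_id)
      have hqs : ∀ t : ℝ, f (x, t + 1) = Complex.exp (2 * (π:ℂ) * Complex.I * (ξ.2:ℂ)) * f (x, t) := by
        intro t
        have := hquasi (x, t) 0 1
        simpa using this
      have hw := wirtinger1D ξ.2 (fun t => f (x, t)) hgslice hqs
      have hi1 : IntegrableOn (fun y : ℝ => ‖deriv (fun t => f (x, t)) y‖ ^ 2) A volume := by
        apply hslice_int
        have : (fun y : ℝ => ‖deriv (fun t => f (x, t)) y‖ ^ 2)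
            = fun y : ℝ => ‖fderiv ℝ f (x, y) ((0:ℝ), (1:ℝ))‖ ^ 2 :=
          funext fun y => by rw [hD2 (x, y)]
        rw [this]
        exact (((hfder.comp (continuous_const.prodMk continuous_id)).clm_apply
          continuous_const).norm.pow 2)
      have hi2 : IntegrableOn (fun y : ℝ => c2 * ‖f (x, y)‖ ^ 2) A volume := by
        apply hslice_int
        exact continuous_const.mul ((hfd.continuous.comp
          (continuous_const.prodMk continuous_id)).norm.pow 2)
      rw [integral_sub hi1 hi2, integral_const_mul, sub_nonneg]
      exact hw
    have h0 : (0:ℝ) ≤ ∫ x in A, ∫ y in A,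
        (‖deriv (fun t => f ((x, y).1, t)) (x, y).2‖ ^ 2 - c2 * ‖f (x, y)‖ ^ 2) :=
      setIntegral_nonneg hAm hinner
    rw [← hfub] at h0
    rw [hsplit] at h0
    linarith
  -- lattice distance bound
  have hlat : latticeDist ξ ^ 2 ≤ (ξ.1 - round ξ.1) ^ 2 + (ξ.2 - round ξ.2) ^ 2 := by
    have hmem : Real.sqrt ((ξ.1 - round ξ.1) ^ 2 + (ξ.2 - round ξ.2) ^ 2)
        ∈ {r : ℝ | ∃ m n : ℤ, r = Real.sqrt ((ξ.1 - m) ^ 2 + (ξ.2 - n) ^ 2)} :=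
      ⟨round ξ.1, round ξ.2, rfl⟩
    have hbdd : BddBelow {r : ℝ | ∃ m n : ℤ, r = Real.sqrt ((ξ.1 - m) ^ 2 + (ξ.2 - n) ^ 2)} :=
      ⟨0, fun r hr => by obtain ⟨m, n, rfl⟩ := hr; positivity⟩
    have h1 : latticeDist ξ ≤ Real.sqrt ((ξ.1 - round ξ.1) ^ 2 + (ξ.2 - round ξ.2) ^ 2) :=
      csInf_le hbdd hmem
    have h0 : 0 ≤ latticeDist ξ :=
      le_csInf ⟨_, hmem⟩ (fun r hr => by obtain ⟨m, n, rfl⟩ := hr; positivity)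
    calc latticeDist ξ ^ 2 ≤ (Real.sqrt ((ξ.1 - round ξ.1) ^ 2 + (ξ.2 - round ξ.2) ^ 2)) ^ 2 := by
          gcongr
      _ = (ξ.1 - round ξ.1) ^ 2 + (ξ.2 - round ξ.2) ^ 2 := Real.sq_sqrt (by positivity)
  -- assemble
  have hIadd : ∫ z in A ×ˢ A, (‖deriv (fun t => f (t, z.2)) z.1‖ ^ 2
        + ‖deriv (fun t => f (z.1, t)) z.2‖ ^ 2)
      = (∫ z in A ×ˢ A, ‖deriv (fun t => f (t, z.2)) z.1‖ ^ 2)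
        + ∫ z in A ×ˢ A, ‖deriv (fun t => f (z.1, t)) z.2‖ ^ 2 :=
    integral_add (hG1c.continuousOn.integrableOn_compact (isCompact_Icc.prod isCompact_Icc))
      (hG2c.continuousOn.integrableOn_compact (isCompact_Icc.prod isCompact_Icc))
  have hfinal : 4 * π ^ 2 * latticeDist ξ ^ 2 * ∫ z in A ×ˢ A, ‖f z‖ ^ 2
      ≤ ∫ z in A ×ˢ A, (‖deriv (fun t => f (t, z.2)) z.1‖ ^ 2
          + ‖deriv (fun t => f (z.1, t)) z.2‖ ^ 2) := by
    have h4 : (0:ℝ) ≤ 4 * π ^ 2 := by positivity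
    have e : 4 * π ^ 2 * latticeDist ξ ^ 2
        ≤ 4 * π ^ 2 * ((ξ.1 - round ξ.1) ^ 2 + (ξ.2 - round ξ.2) ^ 2) :=
      mul_le_mul_of_nonneg_left hlat h4
    calc 4 * π ^ 2 * latticeDist ξ ^ 2 * ∫ z in A ×ˢ A, ‖f z‖ ^ 2
        ≤ 4 * π ^ 2 * ((ξ.1 - round ξ.1) ^ 2 + (ξ.2 - round ξ.2) ^ 2)
            * ∫ z in A ×ˢ A, ‖f z‖ ^ 2 := mul_le_mul_of_nonneg_right e hJ0
      _ = 4 * π ^ 2 * (ξ.1 - round ξ.1) ^ 2 * (∫ z in A ×ˢ A, ‖f z‖ ^ 2)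
          + 4 * π ^ 2 * (ξ.2 - round ξ.2) ^ 2 * ∫ z in A ×ˢ A, ‖f z‖ ^ 2 := by ring
      _ ≤ (∫ z in A ×ˢ A, ‖deriv (fun t => f (t, z.2)) z.1‖ ^ 2)
          + ∫ z in A ×ˢ A, ‖deriv (fun t => f (z.1, t)) z.2‖ ^ 2 := add_le_add key1 key2
      _ = _ := hIadd.symm
  exact hfinal
end
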